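/- arXiv:2412.01686 — 5 statements merged into one kernel-verified Lean document; each statement's English description precedes it below -/
import Mathlib

section
/- Pre-Pöppe product rule (Lemma 3). Let m ∈ ℕ and x ∈ ℝ. Let p, p̂ : ℝ² → ℂ^{m×m} be continuously differentiable, with p, p̂ and all their first-order partial derivatives bounded, absolutely integrable over (-∞,0] in each argument, and tending to 0 as either argument tends to −∞. Let g, ĝ : (-∞,0]² → ℂ^{m×m} be continuous, bounded, and absolutely integrable in each argument. Then for all z, ζ ∈ (-∞,0]: ∫∫∫_{(-∞,0]³} g(z,ξ)·[(∂₂p)(ξ+x, ν+x)·p̂(ν+x, η+x) + p(ξ+x, ν+x)·(∂₁p̂)(ν+x, η+x)]·ĝ(η,ζ) dν dη dξ = (∫_{-∞}^0 g(z,ξ)·p(ξ+x, x) dξ)·(∫_{-∞}^0 p̂(x, η+x)·ĝ(η,ζ) dη). In operator language this says [[G(P_{0,1}P̂ + P P̂_{1,0})Ĝ]](z,ζ) = [[GP]](z,0)·[[P̂Ĝ]](0,ζ) for semi-additive Hilbert–Schmidt operators P, P̂ with parameter x and Hilbert–Schmidt operators G, Ĝ. -/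
open MeasureTheory Filter

namespace NCKP

/-- `m × m` complex matrices. -/
abbrev Mat (m : ℕ) := Matrix (Fin m) (Fin m) ℂ

/-- Matrix-valued kernels on `ℝ²`. -/
abbrev Ker (m : ℕ) := ℝ → ℝ → Mat m

/-- Kernel product `(k₁∗k₂)(z,ζ) := ∫_{-∞}^0 k₁(z,ξ)·k₂(ξ,ζ) dξ`, entrywise Bochner integral. -/
noncomputable def conv {m : ℕ} (k₁ k₂ : Ker m) : Ker m :=
  fun z ζ => Matrix.of fun i j => ∫ ξ in Set.Iic (0:ℝ), (k₁ z ξ * k₂ ξ ζ) i j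

/-- `∂_z^a ∂_ζ^b` of a kernel, entrywise. -/
noncomputable def pder {m : ℕ} (a b : ℕ) (p : Ker m) : Ker m :=
  fun z ζ => Matrix.of fun i j =>
    iteratedDeriv a (fun z' => iteratedDeriv b (fun ζ' => p z' ζ' i j) ζ) z

/-- `p^x_{a,b}(z,ζ) := (∂_z^a ∂_ζ^b p)(z+x, ζ+x)`. -/
noncomputable def pSh {m : ℕ} (p : Ker m) (x : ℝ) (a b : ℕ) : Ker m :=
  fun z ζ => pder a b p (z + x) (ζ + x)

/-- `P̂₁ := p^x_{1,0} + p^x_{0,1}`. -/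
noncomputable def pHat1 {m : ℕ} (p : Ker m) (x : ℝ) : Ker m := pSh p x 1 0 + pSh p x 0 1

/-- `P_{[a,b]} := p^x_{a,b} − p^x_{b,a}`. -/
noncomputable def pBr {m : ℕ} (p : Ker m) (x : ℝ) (a b : ℕ) : Ker m := pSh p x a b - pSh p x b a

/-- Bounded, absolutely integrable over `(-∞,0]` in each argument, and tending to `0`
as either argument tends to `−∞` (entrywise). -/
def KernelDecay {m : ℕ} (k : Ker m) : Prop :=
  (∃ C, ∀ (z ζ : ℝ) (i j : Fin m), ‖k z ζ i j‖ ≤ C) ∧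
  (∀ (ζ : ℝ) (i j : Fin m), IntegrableOn (fun z => k z ζ i j) (Set.Iic (0:ℝ))) ∧
  (∀ (z : ℝ) (i j : Fin m), IntegrableOn (fun ζ => k z ζ i j) (Set.Iic (0:ℝ))) ∧
  (∀ (ζ : ℝ) (i j : Fin m), Tendsto (fun z => k z ζ i j) atBot (nhds 0)) ∧
  (∀ (z : ℝ) (i j : Fin m), Tendsto (fun ζ => k z ζ i j) atBot (nhds 0))

/-- A scattering function (with the `y`,`t` dependence suppressed): smooth, with all
partial derivatives bounded, integrable over `(-∞,0]` in each argument and decaying at `−∞`. -/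
def IsScattering {m : ℕ} (p : Ker m) : Prop :=
  (∀ i j : Fin m, ContDiff ℝ (⊤ : ℕ∞) (fun v : ℝ × ℝ => p v.1 v.2 i j)) ∧
  (∀ a b : ℕ, KernelDecay (pder a b p))

/-- Continuous on `(-∞,0]²`, bounded, and absolutely integrable in each argument. -/
def KernelNice {m : ℕ} (k : Ker m) : Prop :=
  (∀ i j : Fin m, ContinuousOn (fun v : ℝ × ℝ => k v.1 v.2 i j)
    (Set.Iic (0:ℝ) ×ˢ Set.Iic (0:ℝ))) ∧
  (∃ C, ∀ (z ζ : ℝ) (i j : Fin m), ‖k z ζ i j‖ ≤ C) ∧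
  (∀ (ζ : ℝ) (i j : Fin m), IntegrableOn (fun z => k z ζ i j) (Set.Iic (0:ℝ))) ∧
  (∀ (z : ℝ) (i j : Fin m), IntegrableOn (fun ζ => k z ζ i j) (Set.Iic (0:ℝ)))

/-- Entrywise iterated derivative in the parameter `x` of an `x`-family of kernels. -/
noncomputable def xder {m : ℕ} (n : ℕ) (w : ℝ → Ker m) : ℝ → Ker m :=
  fun x z ζ => Matrix.of fun i j => iteratedDeriv n (fun x' => w x' z ζ i j) x

/-- `w x` is the kernel of `V − id`, `V := (id − P)⁻¹`, with parameter `x`: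
a smooth family of kernels, whose partial derivatives are all bounded, integrable
and decaying, solving the resolvent equations `w = p^x + p^x∗w = p^x + w∗p^x`. -/
def IsResolventPlus {m : ℕ} (p : Ker m) (w : ℝ → Ker m) : Prop :=
  (∀ i j : Fin m, ContDiff ℝ (⊤ : ℕ∞) (fun v : ℝ × ℝ × ℝ => w v.1 v.2.1 v.2.2 i j)) ∧
  (∀ (n a b : ℕ) (x : ℝ), KernelDecay (pder a b (xder n w x))) ∧
  (∀ x, w x = pSh p x 0 0 + conv (pSh p x 0 0) (w x)) ∧
  (∀ x, w x = pSh p x 0 0 + conv (w x) (pSh p x 0 0))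

/-- `w x` is the kernel of `V† − id`, `V† := (id + P)⁻¹`, with parameter `x`:
it solves `w = −p^x − p^x∗w = −p^x − w∗p^x`. -/
def IsResolventMinus {m : ℕ} (p : Ker m) (w : ℝ → Ker m) : Prop :=
  (∀ i j : Fin m, ContDiff ℝ (⊤ : ℕ∞) (fun v : ℝ × ℝ × ℝ => w v.1 v.2.1 v.2.2 i j)) ∧
  (∀ (n a b : ℕ) (x : ℝ), KernelDecay (pder a b (xder n w x))) ∧
  (∀ x, w x = -(pSh p x 0 0) - conv (pSh p x 0 0) (w x)) ∧
  (∀ x, w x = -(pSh p x 0 0) - conv (w x) (pSh p x 0 0))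

/-- Kernel of the word `A·V'` where `V' = δ + v`. -/
noncomputable def aV {m : ℕ} (A v : Ker m) : Ker m := A + conv A v

/-- Kernel of the word `V·A` where `V = δ + u`. -/
noncomputable def vA {m : ℕ} (u A : Ker m) : Ker m := A + conv u A

/-- Kernel of the word `V A V'` where `V = δ+u`, `V' = δ+v`. -/
noncomputable def vAv {m : ℕ} (u A v : Ker m) : Ker m := vA u (aV A v)

/-- Kernel of the word `V A V' B V''` where `V = δ+u`, `V' = δ+v`, `V'' = δ+w'`. -/
noncomputable def vAvBv {m : ℕ} (u A v B w' : Ker m) : Ker m := vAv u (conv (aV A v) B) w'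

/-- Entrywise `∂_x` of an `x`-family of kernels. -/
noncomputable def dxK {m : ℕ} (E : ℝ → Ker m) (x : ℝ) : Ker m :=
  fun z ζ => Matrix.of fun i j => deriv (fun x' => E x' z ζ i j) x

end NCKP

namespace NCKP

/-- Continuously differentiable kernel, which together with its first-order partial
derivatives is bounded, absolutely integrable over `(-∞,0]` in each argument, and
tends to `0` as either argument tends to `−∞`. -/
def C1Decay {m : ℕ} (p : Ker m) : Prop :=
  (∀ i j : Fin m, ContDiff ℝ 1 (fun v : ℝ × ℝ => p v.1 v.2 i j)) ∧
  KernelDecay p ∧ KernelDecay (pder 1 0 p) ∧ KernelDecay (pder 0 1 p)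

lemma pder01_apply {m : ℕ} (p : Ker m) (z ζ : ℝ) (i j : Fin m) :
    pder 0 1 p z ζ i j = deriv (fun t => p z t i j) ζ := by
  simp [pder, iteratedDeriv_zero, iteratedDeriv_one]

lemma pder10_apply {m : ℕ} (p : Ker m) (z ζ : ℝ) (i j : Fin m) :
    pder 1 0 p z ζ i j = deriv (fun t => p t ζ i j) z := by
  simp [pder, iteratedDeriv_zero, iteratedDeriv_one]

lemma integrableOn_Iic_shift {f : ℝ → ℂ} (hm : Measurable f) {C : ℝ}
    (hC : ∀ t, ‖f t‖ ≤ C) (hint : IntegrableOn f (Set.Iic (0:ℝ))) (x : ℝ) :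
    IntegrableOn (fun ν => f (ν + x)) (Set.Iic (0:ℝ)) := by
  have hemb : MeasurableEmbedding (fun ν : ℝ => ν + x) :=
    (MeasurableEquiv.addRight x).measurableEmbedding
  have hmp : MeasurePreserving (fun ν : ℝ => ν + x) volume volume :=
    measurePreserving_add_right volume x
  have h1 : IntegrableOn (fun ν => f (ν + x)) (Set.Iic (-x)) := by
    have := (hmp.integrableOn_comp_preimage hemb (f := f) (s := Set.Iic (0:ℝ))).mpr hint
    have hpre : (fun ν : ℝ => ν + x) ⁻¹' Set.Iic (0:ℝ) = Set.Iic (-x) := by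
      ext t; simp only [Set.mem_preimage, Set.mem_Iic]
      constructor <;> intro h <;> linarith
    rwa [hpre] at this
  have h2 : IntegrableOn (fun ν => f (ν + x)) (Set.Icc (-x) 0) := by
    refine Measure.integrableOn_of_bounded (by simp) ?_ (ae_of_all _ fun t => hC _)
    exact ((hm.comp (measurable_add_const x)).aestronglyMeasurable)
  exact (h1.union h2).mono_set (fun t ht => by
    rcases le_or_gt t (-x) with h | h
    · exact Or.inl h
    · exact Or.inr ⟨h.le, ht⟩)

lemma keyFTC {m : ℕ} (x : ℝ) (p ph : Ker m) (hp : C1Decay p) (hph : C1Decay ph)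
    (b c : ℝ) (k l : Fin m) :
    IntegrableOn (fun ν => (pder 0 1 p b (ν + x) * ph (ν + x) c
        + p b (ν + x) * pder 1 0 ph (ν + x) c) k l) (Set.Iic (0:ℝ))
    ∧ (∫ ν in Set.Iic (0:ℝ), (pder 0 1 p b (ν + x) * ph (ν + x) c
        + p b (ν + x) * pder 1 0 ph (ν + x) c) k l) = (p b x * ph x c) k l := by
  obtain ⟨hpC1, hpD, hpD10, hpD01⟩ := hp
  obtain ⟨hphC1, hphD, hphD10, hphD01⟩ := hph
  obtain ⟨Cp, hCp⟩ := hpD.1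
  obtain ⟨Cph, hCph⟩ := hphD.1
  obtain ⟨C01, hC01⟩ := hpD01.1
  obtain ⟨C10, hC10⟩ := hphD10.1
  have hdp2 : ∀ (z' : ℝ) (i j : Fin m), Differentiable ℝ (fun t => p z' t i j) := by
    intro z' i j
    exact ((hpC1 i j).differentiable one_ne_zero).comp ((differentiable_const z').prodMk differentiable_id)
  have hdph1 : ∀ (c' : ℝ) (i j : Fin m), Differentiable ℝ (fun t => ph t c' i j) := by
    intro c' i j
    exact ((hphC1 i j).differentiable one_ne_zero).comp (differentiable_id.prodMk (differentiable_const c'))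
  have hu : ∀ (s : Fin m) (ν : ℝ),
      HasDerivAt (fun ν => p b (ν + x) k s) (pder 0 1 p b (ν + x) k s) ν := by
    intro s ν
    rw [pder01_apply]
    exact HasDerivAt.comp_add_const ν x ((hdp2 b k s (ν + x)).hasDerivAt)
  have hv : ∀ (s : Fin m) (ν : ℝ),
      HasDerivAt (fun ν => ph (ν + x) c s l) (pder 1 0 ph (ν + x) c s l) ν := by
    intro s ν
    rw [pder10_apply]
    exact HasDerivAt.comp_add_const ν x ((hdph1 c s l (ν + x)).hasDerivAt)
  have hf : ∀ ν : ℝ, HasDerivAt (fun ν => (p b (ν + x) * ph (ν + x) c) k l)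
      ((pder 0 1 p b (ν + x) * ph (ν + x) c + p b (ν + x) * pder 1 0 ph (ν + x) c) k l) ν := by
    intro ν
    simp only [Matrix.mul_apply, Matrix.add_apply]
    rw [← Finset.sum_add_distrib]
    exact HasDerivAt.fun_sum fun s _ => (hu s ν).mul (hv s ν)
  have hint : IntegrableOn (fun ν => (pder 0 1 p b (ν + x) * ph (ν + x) c
      + p b (ν + x) * pder 1 0 ph (ν + x) c) k l) (Set.Iic (0:ℝ)) := by
    simp only [Matrix.mul_apply, Matrix.add_apply]
    apply Integrable.add
    · apply integrable_finset_sum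
      intro s _
      refine Integrable.bdd_mul ?_ ?_ (ae_of_all _ fun ν => hC01 b (ν + x) k s)
      · refine integrableOn_Iic_shift ?_ (fun t => hCph t c s l) (hphD.2.1 c s l) x
        exact ((hphC1 s l).continuous.comp (continuous_id.prodMk continuous_const)).measurable
      · have hrw : (fun ν : ℝ => pder 0 1 p b (ν + x) k s)
            = (deriv (fun t => p b t k s)) ∘ (fun ν => ν + x) := by
          funext ν; simp [pder01_apply, Function.comp]
        rw [hrw]
        exact ((measurable_deriv _).comp (measurable_add_const x)).aestronglyMeasurable
    · apply integrable_finset_sum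
      intro s _
      refine Integrable.bdd_mul ?_ ?_ (ae_of_all _ fun ν => hCp b (ν + x) k s)
      · have hmeas : Measurable (fun t => pder 1 0 ph t c s l) := by
          have hrw : (fun t : ℝ => pder 1 0 ph t c s l) = deriv (fun z' => ph z' c s l) := by
            funext t; simp [pder10_apply]
          rw [hrw]; exact measurable_deriv _
        exact integrableOn_Iic_shift hmeas (fun t => hC10 t c s l) (hphD10.2.1 c s l) x
      · exact ((hpC1 k s).continuous.comp
          (continuous_const.prodMk ((continuous_id.add continuous_const)))).aestronglyMeasurable
  refine ⟨hint, ?_⟩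
  have hshift : Tendsto (fun ν : ℝ => ν + x) atBot atBot :=
    tendsto_atBot_add_const_right atBot x tendsto_id
  have htend : Tendsto (fun ν => (p b (ν + x) * ph (ν + x) c) k l) atBot (nhds 0) := by
    simp only [Matrix.mul_apply]
    have : Tendsto (fun ν : ℝ => ∑ s : Fin m, p b (ν + x) k s * ph (ν + x) c s l)
        atBot (nhds (∑ s : Fin m, (0:ℂ))) := by
      apply tendsto_finset_sum
      intro s _
      have h1 : Tendsto (fun ν : ℝ => p b (ν + x) k s) atBot (nhds 0) :=
        (hpD.2.2.2.2 b k s).comp hshift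
      have h2 : Tendsto (fun ν : ℝ => ph (ν + x) c s l) atBot (nhds 0) :=
        (hphD.2.2.2.1 c s l).comp hshift
      simpa using h1.mul h2
    simpa using this
  have hcont : ContinuousWithinAt (fun ν => (p b (ν + x) * ph (ν + x) c) k l) (Set.Iic 0) 0 :=
    ((hf 0).continuousAt).continuousWithinAt
  have := integral_Iic_of_hasDerivAt_of_tendsto hcont (fun ν _ => hf ν) hint htend
  rw [this]
  simp [Matrix.mul_apply]


/-- **Pre-Pöppe product rule (Lemma 3).** For semi-additive kernels `p`, `p̂` with
parameter `x` and kernels `g`, `ĝ`, for all `z, ζ ∈ (-∞,0]`: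
`∫∫∫ g(z,ξ)·[(∂₂p)(ξ+x,ν+x)·p̂(ν+x,η+x) + p(ξ+x,ν+x)·(∂₁p̂)(ν+x,η+x)]·ĝ(η,ζ) dν dη dξ
  = (∫ g(z,ξ)·p(ξ+x,x) dξ)·(∫ p̂(x,η+x)·ĝ(η,ζ) dη)`;
in operator language, `[[G(P_{0,1}P̂ + P P̂_{1,0})Ĝ]](z,ζ) = [[GP]](z,0)·[[P̂Ĝ]](0,ζ)`. -/
theorem pre_poppe_product {m : ℕ} (x : ℝ) (p ph : Ker m)
    (hp : C1Decay p) (hph : C1Decay ph)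
    (g gh : Ker m) (hg : KernelNice g) (hgh : KernelNice gh) :
    ∀ z ∈ Set.Iic (0:ℝ), ∀ ζ ∈ Set.Iic (0:ℝ),
      (Matrix.of fun i j =>
        ∫ ξ in Set.Iic (0:ℝ), ∫ η in Set.Iic (0:ℝ), ∫ ν in Set.Iic (0:ℝ),
          (g z ξ *
            ((pder 0 1 p (ξ + x) (ν + x)) * ph (ν + x) (η + x)
              + p (ξ + x) (ν + x) * (pder 1 0 ph (ν + x) (η + x))) *
            gh η ζ) i j : Mat m)
      =
      (Matrix.of fun i j => ∫ ξ in Set.Iic (0:ℝ), (g z ξ * p (ξ + x) x) i j : Mat m) *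
      (Matrix.of fun i j => ∫ η in Set.Iic (0:ℝ), (ph x (η + x) * gh η ζ) i j : Mat m) := by
  intro z hz ζ hζ
  obtain ⟨Cp, hCp⟩ := hp.2.1.1
  obtain ⟨Cph, hCph⟩ := hph.2.1.1
  ext i j
  simp only [Matrix.of_apply]
  have stepA : ∀ ξ η : ℝ,
      (∫ ν in Set.Iic (0:ℝ),
        (g z ξ * ((pder 0 1 p (ξ + x) (ν + x)) * ph (ν + x) (η + x)
          + p (ξ + x) (ν + x) * (pder 1 0 ph (ν + x) (η + x))) * gh η ζ) i j)
      = (g z ξ * (p (ξ + x) x * ph x (η + x)) * gh η ζ) i j := by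
    intro ξ η
    have hexp : ∀ (M : Mat m),
        (g z ξ * M * gh η ζ) i j = ∑ l : Fin m, ∑ k : Fin m,
          g z ξ i k * (M k l * gh η ζ l j) := by
      intro M
      simp [Matrix.mul_apply, Finset.sum_mul, mul_assoc]
    simp only [hexp]
    rw [integral_finset_sum]
    · have hterm : ∀ l : Fin m,
          (∫ ν in Set.Iic (0:ℝ), ∑ k : Fin m, g z ξ i k *
            (((pder 0 1 p (ξ + x) (ν + x)) * ph (ν + x) (η + x)
              + p (ξ + x) (ν + x) * (pder 1 0 ph (ν + x) (η + x))) k l * gh η ζ l j))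
          = ∑ k : Fin m, g z ξ i k *
              ((p (ξ + x) x * ph x (η + x)) k l * gh η ζ l j) := by
        intro l
        rw [integral_finset_sum]
        · refine Finset.sum_congr rfl fun k _ => ?_
          rw [integral_const_mul, integral_mul_const,
            (keyFTC x p ph hp hph (ξ + x) (η + x) k l).2]
        · intro k _
          exact (((keyFTC x p ph hp hph (ξ + x) (η + x) k l).1.mul_const
            (gh η ζ l j)).const_mul (g z ξ i k))
      exact Finset.sum_congr rfl fun l _ => hterm l
    · intro l _
      apply integrable_finset_sum
      intro k _
      exact (((keyFTC x p ph hp hph (ξ + x) (η + x) k l).1.mul_const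
        (gh η ζ l j)).const_mul (g z ξ i k))
  simp only [stepA]
  have hQB : ∀ (l j' : Fin m),
      IntegrableOn (fun η => (ph x (η + x) * gh η ζ) l j') (Set.Iic (0:ℝ)) := by
    intro l j'
    simp only [Matrix.mul_apply]
    apply integrable_finset_sum
    intro s _
    refine Integrable.bdd_mul (hgh.2.2.1 ζ s j') ?_ (ae_of_all _ fun η => hCph x (η + x) l s)
    exact ((hph.1 l s).continuous.comp
      (continuous_const.prodMk (continuous_id.add continuous_const))).aestronglyMeasurable
  have hGP : ∀ (i' l : Fin m),
      IntegrableOn (fun ξ => (g z ξ * p (ξ + x) x) i' l) (Set.Iic (0:ℝ)) := by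
    intro i' l
    simp only [Matrix.mul_apply]
    apply integrable_finset_sum
    intro s _
    have h := Integrable.bdd_mul (hg.2.2.2 z i' s)
      (((hp.1 s l).continuous.comp
        ((continuous_id.add continuous_const).prodMk continuous_const)).aestronglyMeasurable)
      (ae_of_all _ fun ξ => hCp (ξ + x) x s l)
    simpa [mul_comm] using h
  have stepB : ∀ ξ : ℝ,
      (∫ η in Set.Iic (0:ℝ), (g z ξ * (p (ξ + x) x * ph x (η + x)) * gh η ζ) i j)
      = ∑ l : Fin m, (g z ξ * p (ξ + x) x) i l *
          ∫ η in Set.Iic (0:ℝ), (ph x (η + x) * gh η ζ) l j := by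
    intro ξ
    have hexp : ∀ η : ℝ,
        (g z ξ * (p (ξ + x) x * ph x (η + x)) * gh η ζ) i j
        = ∑ l : Fin m, (g z ξ * p (ξ + x) x) i l * (ph x (η + x) * gh η ζ) l j := by
      intro η
      rw [← mul_assoc, mul_assoc (g z ξ * p (ξ + x) x), Matrix.mul_apply]
    simp only [hexp]
    rw [integral_finset_sum]
    · exact Finset.sum_congr rfl fun l _ => integral_const_mul _ _
    · intro l _
      exact (hQB l j).const_mul _
  simp only [stepB]
  rw [integral_finset_sum]
  · simp only [Matrix.mul_apply, Matrix.of_apply]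
    exact Finset.sum_congr rfl fun l _ => integral_mul_const _ _
  · intro l _
    exact (hGP i l).mul_const _

end NCKP
end

section
/- Square of the skew solution form (identity [V]² = {V P̂₁ V} + {V P_{[1,0]} V†}). Let p be a scattering function, x ∈ ℝ, and w₊, w₋ resolvent kernels for p. Then for all z, ζ ∈ (-∞,0]: [V](z,0)·[V](0,ζ) = {V P̂₁ V}(z,ζ) + {V P_{[1,0]} V†}(z,ζ); explicitly, (w₊ − w₋)(z,0)·(w₊ − w₋)(0,ζ) = ([[V P̂₁ V]] − [[V† P̂₁ V†]])(z,ζ) + ([[V P_{[1,0]} V†]] − [[V† P_{[1,0]} V]])(z,ζ). -/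
open MeasureTheory Filter

namespace NCKP

variable {m : ℕ}

lemma conv_apply (a b : Ker m) (z ζ : ℝ) (i j : Fin m) :
    conv a b z ζ i j = ∫ ξ in Set.Iic (0:ℝ), (a z ξ * b ξ ζ) i j := rfl

lemma pder_zero_zero (k : Ker m) (z ζ : ℝ) (i j : Fin m) :
    pder 0 0 k z ζ i j = k z ζ i j := by simp [pder]

lemma pder_zero_one (k : Ker m) (z ζ : ℝ) (i j : Fin m) :
    pder 0 1 k z ζ i j = deriv (fun t => k z t i j) ζ := by
  simp [pder, iteratedDeriv_one]

lemma pder_one_zero (k : Ker m) (z ζ : ℝ) (i j : Fin m) :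
    pder 1 0 k z ζ i j = deriv (fun t => k t ζ i j) z := by
  simp [pder, iteratedDeriv_one]

/-- one-variable slice predicates -/
def CB (f : ℝ → ℂ) : Prop := Continuous f ∧ ∃ C, ∀ t, ‖f t‖ ≤ C
def IInt (f : ℝ → ℂ) : Prop := Continuous f ∧ IntegrableOn f (Set.Iic (0:ℝ))

lemma IInt.mul_CB {f g : ℝ → ℂ} (hf : IInt f) (hg : CB g) : IInt (fun t => f t * g t) := by
  refine ⟨hf.1.mul hg.1, ?_⟩
  have := hf.2.bdd_mul (hg.1.aestronglyMeasurable) (ae_of_all _ hg.2.choose_spec)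
  simpa [mul_comm, IntegrableOn] using this

lemma CB.mul_IInt {f g : ℝ → ℂ} (hf : CB f) (hg : IInt g) : IInt (fun t => f t * g t) :=
  ⟨hf.1.mul hg.1, hg.2.bdd_mul hf.1.aestronglyMeasurable (ae_of_all _ hf.2.choose_spec)⟩

lemma IInt.add {f g : ℝ → ℂ} (hf : IInt f) (hg : IInt g) : IInt (fun t => f t + g t) :=
  ⟨hf.1.add hg.1, hf.2.add hg.2⟩

lemma IInt.sum {s : Finset (Fin m)} {f : Fin m → ℝ → ℂ} (h : ∀ k ∈ s, IInt (f k)) :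
    IInt (fun t => ∑ k ∈ s, f k t) :=
  ⟨continuous_finset_sum s (fun k hk => (h k hk).1),
   MeasureTheory.integrable_finset_sum s (fun k hk => (h k hk).2)⟩

/-- integrability of kernel product integrands -/
def KInt (a b : Ker m) : Prop :=
  ∀ (z ζ : ℝ) (i j : Fin m), IntegrableOn (fun ξ => (a z ξ * b ξ ζ) i j) (Set.Iic (0:ℝ))

lemma KInt_of_left (a b : Ker m) (ha : ∀ z i k, IInt (fun ξ => a z ξ i k))
    (hb : ∀ ζ k j, CB (fun ξ => b ξ ζ k j)) : KInt a b := by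
  intro z ζ i j
  have : (fun ξ => (a z ξ * b ξ ζ) i j) = fun ξ => ∑ k, a z ξ i k * b ξ ζ k j := by
    funext ξ; simp [Matrix.mul_apply]
  rw [this]
  exact (IInt.sum (fun k _ => (ha z i k).mul_CB (hb ζ k j))).2

lemma KInt_of_right (a b : Ker m) (ha : ∀ z i k, CB (fun ξ => a z ξ i k))
    (hb : ∀ ζ k j, IInt (fun ξ => b ξ ζ k j)) : KInt a b := by
  intro z ζ i j
  have : (fun ξ => (a z ξ * b ξ ζ) i j) = fun ξ => ∑ k, a z ξ i k * b ξ ζ k j := by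
    funext ξ; simp [Matrix.mul_apply]
  rw [this]
  exact (IInt.sum (fun k _ => (ha z i k).mul_IInt (hb ζ k j))).2

lemma KInt.add_left {a b c : Ker m} (h1 : KInt a c) (h2 : KInt b c) : KInt (a + b) c := by
  intro z ζ i j
  have : (fun ξ => ((a+b) z ξ * c ξ ζ) i j)
      = fun ξ => (a z ξ * c ξ ζ) i j + (b z ξ * c ξ ζ) i j := by
    funext ξ; simp [add_mul]
  rw [this]; exact (h1 z ζ i j).add (h2 z ζ i j)

lemma KInt.sub_left {a b c : Ker m} (h1 : KInt a c) (h2 : KInt b c) : KInt (a - b) c := by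
  intro z ζ i j
  have : (fun ξ => ((a-b) z ξ * c ξ ζ) i j)
      = fun ξ => (a z ξ * c ξ ζ) i j - (b z ξ * c ξ ζ) i j := by
    funext ξ; simp [sub_mul]
  rw [this]; exact (h1 z ζ i j).sub (h2 z ζ i j)

lemma KInt.add_right {a b c : Ker m} (h1 : KInt a b) (h2 : KInt a c) : KInt a (b + c) := by
  intro z ζ i j
  have : (fun ξ => (a z ξ * (b+c) ξ ζ) i j)
      = fun ξ => (a z ξ * b ξ ζ) i j + (a z ξ * c ξ ζ) i j := by
    funext ξ; simp [mul_add]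
  rw [this]; exact (h1 z ζ i j).add (h2 z ζ i j)

lemma KInt.sub_right {a b c : Ker m} (h1 : KInt a b) (h2 : KInt a c) : KInt a (b - c) := by
  intro z ζ i j
  have : (fun ξ => (a z ξ * (b-c) ξ ζ) i j)
      = fun ξ => (a z ξ * b ξ ζ) i j - (a z ξ * c ξ ζ) i j := by
    funext ξ; simp [mul_sub]
  rw [this]; exact (h1 z ζ i j).sub (h2 z ζ i j)

/-- conv splitting -/
lemma conv_add_left {a b c : Ker m} (h1 : KInt a c) (h2 : KInt b c) (z ζ : ℝ) :
    conv (a + b) c z ζ = conv a c z ζ + conv b c z ζ := by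
  ext i j
  have : (fun ξ => ((a+b) z ξ * c ξ ζ) i j)
      = fun ξ => (a z ξ * c ξ ζ) i j + (b z ξ * c ξ ζ) i j := by
    funext ξ; simp [add_mul]
  simp only [conv_apply, Matrix.add_apply, this]
  exact integral_add (h1 z ζ i j) (h2 z ζ i j)

lemma conv_sub_left {a b c : Ker m} (h1 : KInt a c) (h2 : KInt b c) (z ζ : ℝ) :
    conv (a - b) c z ζ = conv a c z ζ - conv b c z ζ := by
  ext i j
  have : (fun ξ => ((a-b) z ξ * c ξ ζ) i j)
      = fun ξ => (a z ξ * c ξ ζ) i j - (b z ξ * c ξ ζ) i j := by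
    funext ξ; simp [sub_mul]
  simp only [conv_apply, Matrix.sub_apply, this]
  exact integral_sub (h1 z ζ i j) (h2 z ζ i j)

lemma conv_add_right {a b c : Ker m} (h1 : KInt a b) (h2 : KInt a c) (z ζ : ℝ) :
    conv a (b + c) z ζ = conv a b z ζ + conv a c z ζ := by
  ext i j
  have : (fun ξ => (a z ξ * (b+c) ξ ζ) i j)
      = fun ξ => (a z ξ * b ξ ζ) i j + (a z ξ * c ξ ζ) i j := by
    funext ξ; simp [mul_add]
  simp only [conv_apply, Matrix.add_apply, this]
  exact integral_add (h1 z ζ i j) (h2 z ζ i j)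

lemma conv_sub_right {a b c : Ker m} (h1 : KInt a b) (h2 : KInt a c) (z ζ : ℝ) :
    conv a (b - c) z ζ = conv a b z ζ - conv a c z ζ := by
  ext i j
  have : (fun ξ => (a z ξ * (b-c) ξ ζ) i j)
      = fun ξ => (a z ξ * b ξ ζ) i j - (a z ξ * c ξ ζ) i j := by
    funext ξ; simp [mul_sub]
  simp only [conv_apply, Matrix.sub_apply, this]
  exact integral_sub (h1 z ζ i j) (h2 z ζ i j)


/-- CB of `t ↦ conv a b z t i j` : integrable rows of `a`, bounded/cts `b`. -/
lemma CB_conv_snd (a b : Ker m) (z : ℝ) (i j : Fin m)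
    (ha : ∀ k, IInt (fun η => a z η i k))
    (hb1 : ∀ (t : ℝ) k, Continuous fun η => b η t k j)
    (hb2 : ∀ (η : ℝ) k, Continuous fun t => b η t k j)
    (C : ℝ) (hbC : ∀ η t k, ‖b η t k j‖ ≤ C) :
    CB (fun t => conv a b z t i j) := by
  have hbd : ∀ (t η : ℝ), ‖(a z η * b η t) i j‖ ≤ ∑ k, ‖a z η i k‖ * C := by
    intro t η
    calc ‖(a z η * b η t) i j‖ = ‖∑ k, a z η i k * b η t k j‖ := by rw [Matrix.mul_apply]
    _ ≤ ∑ k, ‖a z η i k * b η t k j‖ := norm_sum_le _ _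
    _ ≤ ∑ k, ‖a z η i k‖ * C := by
        refine Finset.sum_le_sum fun k _ => ?_
        rw [norm_mul]
        exact mul_le_mul_of_nonneg_left (hbC η t k) (norm_nonneg _)
  have hbound_int : IntegrableOn (fun η => ∑ k, ‖a z η i k‖ * C) (Set.Iic (0:ℝ)) :=
    MeasureTheory.integrable_finset_sum _ (fun k _ => ((ha k).2.norm.mul_const C))
  constructor
  · refine continuous_of_dominated (μ := volume.restrict (Set.Iic (0:ℝ)))
      (F := fun t η => (a z η * b η t) i j) ?_ ?_ hbound_int ?_
    · intro t
      have : Continuous fun η => (a z η * b η t) i j := by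
        simp only [Matrix.mul_apply]
        exact continuous_finset_sum _ fun k _ => ((ha k).1.mul (hb1 t k))
      exact this.aestronglyMeasurable
    · intro t; exact ae_of_all _ fun η => hbd t η
    · refine ae_of_all _ fun η => ?_
      simp only [Matrix.mul_apply]
      exact continuous_finset_sum _ fun k _ => continuous_const.mul (hb2 η k)
  · refine ⟨∫ η in Set.Iic (0:ℝ), ∑ k, ‖a z η i k‖ * C, fun t => ?_⟩
    exact norm_integral_le_of_norm_le hbound_int (ae_of_all _ fun η => hbd t η)

/-- CB of `t ↦ conv b a t ζ i j` : integrable columns of `a`, bounded/cts `b`. -/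
lemma CB_conv_fst (b a : Ker m) (ζ : ℝ) (i j : Fin m)
    (ha : ∀ k, IInt (fun ξ => a ξ ζ k j))
    (hb1 : ∀ (t : ℝ) k, Continuous fun ξ => b t ξ i k)
    (hb2 : ∀ (ξ : ℝ) k, Continuous fun t => b t ξ i k)
    (C : ℝ) (hbC : ∀ t ξ k, ‖b t ξ i k‖ ≤ C) :
    CB (fun t => conv b a t ζ i j) := by
  have hbd : ∀ (t ξ : ℝ), ‖(b t ξ * a ξ ζ) i j‖ ≤ ∑ k, C * ‖a ξ ζ k j‖ := by
    intro t ξ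
    calc ‖(b t ξ * a ξ ζ) i j‖ = ‖∑ k, b t ξ i k * a ξ ζ k j‖ := by rw [Matrix.mul_apply]
    _ ≤ ∑ k, ‖b t ξ i k * a ξ ζ k j‖ := norm_sum_le _ _
    _ ≤ ∑ k, C * ‖a ξ ζ k j‖ := by
        refine Finset.sum_le_sum fun k _ => ?_
        rw [norm_mul]
        exact mul_le_mul_of_nonneg_right (hbC t ξ k) (norm_nonneg _)
  have hbound_int : IntegrableOn (fun ξ => ∑ k, C * ‖a ξ ζ k j‖) (Set.Iic (0:ℝ)) :=
    MeasureTheory.integrable_finset_sum _ (fun k _ => ((ha k).2.norm.const_mul C))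
  constructor
  · refine continuous_of_dominated (μ := volume.restrict (Set.Iic (0:ℝ)))
      (F := fun t ξ => (b t ξ * a ξ ζ) i j) ?_ ?_ hbound_int ?_
    · intro t
      have : Continuous fun ξ => (b t ξ * a ξ ζ) i j := by
        simp only [Matrix.mul_apply]
        exact continuous_finset_sum _ fun k _ => ((hb1 t k).mul (ha k).1)
      exact this.aestronglyMeasurable
    · intro t; exact ae_of_all _ fun ξ => hbd t ξ
    · refine ae_of_all _ fun ξ => ?_
      simp only [Matrix.mul_apply]
      exact continuous_finset_sum _ fun k _ => (hb2 ξ k).mul continuous_const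
  · refine ⟨∫ ξ in Set.Iic (0:ℝ), ∑ k, C * ‖a ξ ζ k j‖, fun t => ?_⟩
    exact norm_integral_le_of_norm_le hbound_int (ae_of_all _ fun ξ => hbd t ξ)

/-- differentiation under the integral, in the second argument of `conv`. -/
lemma hasDerivAt_conv_snd (a q q' : Ker m) (z t₀ : ℝ) (i j : Fin m)
    (ha : ∀ k, IInt (fun ξ => a z ξ i k))
    (hq1 : ∀ (t : ℝ) k, Continuous fun ξ => q ξ t k j)
    (Cq : ℝ) (hqC : ∀ ξ t k, ‖q ξ t k j‖ ≤ Cq)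
    (hq'1 : ∀ (t : ℝ) k, Continuous fun ξ => q' ξ t k j)
    (Cq' : ℝ) (hq'C : ∀ ξ t k, ‖q' ξ t k j‖ ≤ Cq')
    (hd : ∀ ξ (t : ℝ) k, HasDerivAt (fun s => q ξ s k j) (q' ξ t k j) t) :
    HasDerivAt (fun t => conv a q z t i j) (conv a q' z t₀ i j) t₀ := by
  have key := hasDerivAt_integral_of_dominated_loc_of_deriv_le
    (μ := volume.restrict (Set.Iic (0:ℝ))) (x₀ := t₀)
    (F := fun t ξ => (a z ξ * q ξ t) i j) (F' := fun t ξ => (a z ξ * q' ξ t) i j)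
    (bound := fun ξ => ∑ k, ‖a z ξ i k‖ * Cq') (s := Metric.ball t₀ 1) (Metric.ball_mem_nhds t₀ one_pos)
    ?_ ?_ ?_ ?_ ?_ ?_
  · exact key.2
  · refine Eventually.of_forall fun t => ?_
    have : Continuous fun ξ => (a z ξ * q ξ t) i j := by
      simp only [Matrix.mul_apply]
      exact continuous_finset_sum _ fun k _ => ((ha k).1.mul (hq1 t k))
    exact this.aestronglyMeasurable
  · -- integrability at t₀
    have : (fun ξ => (a z ξ * q ξ t₀) i j) = fun ξ => ∑ k, a z ξ i k * q ξ t₀ k j := by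
      funext ξ; simp [Matrix.mul_apply]
    show Integrable (fun ξ => (a z ξ * q ξ t₀) i j) _
    rw [this]
    refine MeasureTheory.integrable_finset_sum _ fun k _ => ?_
    have := (ha k).2.bdd_mul (hq1 t₀ k).aestronglyMeasurable (ae_of_all _ fun ξ => hqC ξ t₀ k)
    simpa [mul_comm] using this
  · have : Continuous fun ξ => (a z ξ * q' ξ t₀) i j := by
      simp only [Matrix.mul_apply]
      exact continuous_finset_sum _ fun k _ => ((ha k).1.mul (hq'1 t₀ k))
    exact this.aestronglyMeasurable
  · refine ae_of_all _ fun ξ => fun t _ => ?_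
    calc ‖(a z ξ * q' ξ t) i j‖ = ‖∑ k, a z ξ i k * q' ξ t k j‖ := by rw [Matrix.mul_apply]
    _ ≤ ∑ k, ‖a z ξ i k * q' ξ t k j‖ := norm_sum_le _ _
    _ ≤ ∑ k, ‖a z ξ i k‖ * Cq' := by
        refine Finset.sum_le_sum fun k _ => ?_
        rw [norm_mul]
        exact mul_le_mul_of_nonneg_left (hq'C ξ t k) (norm_nonneg _)
  · exact MeasureTheory.integrable_finset_sum _ (fun k _ => ((ha k).2.norm.mul_const Cq'))
  · refine ae_of_all _ fun ξ t _ => ?_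
    have : ∀ t, (a z ξ * q ξ t) i j = ∑ k, a z ξ i k * q ξ t k j := by
      intro t; simp [Matrix.mul_apply]
    simp only [this]
    have h2 : (a z ξ * q' ξ t) i j = ∑ k, a z ξ i k * q' ξ t k j := by
      simp [Matrix.mul_apply]
    rw [h2]
    exact HasDerivAt.fun_sum fun k _ => (hd ξ t k).const_mul _

/-- differentiation under the integral, in the first argument of `conv`. -/
lemma hasDerivAt_conv_fst (q q' a : Ker m) (ζ t₀ : ℝ) (i j : Fin m)
    (ha : ∀ k, IInt (fun ξ => a ξ ζ k j))
    (hq1 : ∀ (t : ℝ) k, Continuous fun ξ => q t ξ i k)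
    (Cq : ℝ) (hqC : ∀ t ξ k, ‖q t ξ i k‖ ≤ Cq)
    (hq'1 : ∀ (t : ℝ) k, Continuous fun ξ => q' t ξ i k)
    (Cq' : ℝ) (hq'C : ∀ t ξ k, ‖q' t ξ i k‖ ≤ Cq')
    (hd : ∀ (t ξ : ℝ) k, HasDerivAt (fun s => q s ξ i k) (q' t ξ i k) t) :
    HasDerivAt (fun t => conv q a t ζ i j) (conv q' a t₀ ζ i j) t₀ := by
  have key := hasDerivAt_integral_of_dominated_loc_of_deriv_le
    (μ := volume.restrict (Set.Iic (0:ℝ))) (x₀ := t₀)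
    (F := fun t ξ => (q t ξ * a ξ ζ) i j) (F' := fun t ξ => (q' t ξ * a ξ ζ) i j)
    (bound := fun ξ => ∑ k, Cq' * ‖a ξ ζ k j‖) (s := Metric.ball t₀ 1) (Metric.ball_mem_nhds t₀ one_pos)
    ?_ ?_ ?_ ?_ ?_ ?_
  · exact key.2
  · refine Eventually.of_forall fun t => ?_
    have : Continuous fun ξ => (q t ξ * a ξ ζ) i j := by
      simp only [Matrix.mul_apply]
      exact continuous_finset_sum _ fun k _ => ((hq1 t k).mul (ha k).1)
    exact this.aestronglyMeasurable
  · have : (fun ξ => (q t₀ ξ * a ξ ζ) i j) = fun ξ => ∑ k, q t₀ ξ i k * a ξ ζ k j := by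
      funext ξ; simp [Matrix.mul_apply]
    show Integrable (fun ξ => (q t₀ ξ * a ξ ζ) i j) _
    rw [this]
    refine MeasureTheory.integrable_finset_sum _ fun k _ => ?_
    exact (ha k).2.bdd_mul (hq1 t₀ k).aestronglyMeasurable (ae_of_all _ fun ξ => hqC t₀ ξ k)
  · have : Continuous fun ξ => (q' t₀ ξ * a ξ ζ) i j := by
      simp only [Matrix.mul_apply]
      exact continuous_finset_sum _ fun k _ => ((hq'1 t₀ k).mul (ha k).1)
    exact this.aestronglyMeasurable
  · refine ae_of_all _ fun ξ => fun t _ => ?_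
    calc ‖(q' t ξ * a ξ ζ) i j‖ = ‖∑ k, q' t ξ i k * a ξ ζ k j‖ := by rw [Matrix.mul_apply]
    _ ≤ ∑ k, ‖q' t ξ i k * a ξ ζ k j‖ := norm_sum_le _ _
    _ ≤ ∑ k, Cq' * ‖a ξ ζ k j‖ := by
        refine Finset.sum_le_sum fun k _ => ?_
        rw [norm_mul]
        exact mul_le_mul_of_nonneg_right (hq'C t ξ k) (norm_nonneg _)
  · exact MeasureTheory.integrable_finset_sum _ (fun k _ => ((ha k).2.norm.const_mul Cq'))
  · refine ae_of_all _ fun ξ t _ => ?_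
    have h1 : ∀ t, (q t ξ * a ξ ζ) i j = ∑ k, q t ξ i k * a ξ ζ k j := by
      intro t; simp [Matrix.mul_apply]
    simp only [h1]
    have h2 : (q' t ξ * a ξ ζ) i j = ∑ k, q' t ξ i k * a ξ ζ k j := by
      simp [Matrix.mul_apply]
    rw [h2]
    exact HasDerivAt.fun_sum fun k _ => (hd t ξ k).mul_const _


/-- partial derivative in the 2nd variable of a smooth function of two real variables. -/
lemma hasDerivAt_snd {f : ℝ × ℝ → ℂ} (hf : ContDiff ℝ (⊤ : ℕ∞) f) (z t : ℝ) :
    HasDerivAt (fun s => f (z, s)) (fderiv ℝ f (z, t) (0, 1)) t := by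
  have h1 : HasFDerivAt f (fderiv ℝ f (z, t)) (z, t) :=
    (hf.differentiable (by simp) (z, t)).hasFDerivAt
  have h2 : HasDerivAt (fun s : ℝ => ((z : ℝ), s)) ((0 : ℝ), (1 : ℝ)) t :=
    (hasDerivAt_const t z).prodMk (hasDerivAt_id t)
  exact h1.comp_hasDerivAt t h2

lemma hasDerivAt_fst {f : ℝ × ℝ → ℂ} (hf : ContDiff ℝ (⊤ : ℕ∞) f) (t ζ : ℝ) :
    HasDerivAt (fun s => f (s, ζ)) (fderiv ℝ f (t, ζ) (1, 0)) t := by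
  have h1 : HasFDerivAt f (fderiv ℝ f (t, ζ)) (t, ζ) :=
    (hf.differentiable (by simp) (t, ζ)).hasFDerivAt
  have h2 : HasDerivAt (fun s : ℝ => (s, ζ)) ((1 : ℝ), (0 : ℝ)) t :=
    (hasDerivAt_id t).prodMk (hasDerivAt_const t ζ)
  exact h1.comp_hasDerivAt t h2

lemma deriv_snd_eq {f : ℝ × ℝ → ℂ} (hf : ContDiff ℝ (⊤ : ℕ∞) f) (z t : ℝ) :
    deriv (fun s => f (z, s)) t = fderiv ℝ f (z, t) (0, 1) :=
  (hasDerivAt_snd hf z t).deriv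

lemma deriv_fst_eq {f : ℝ × ℝ → ℂ} (hf : ContDiff ℝ (⊤ : ℕ∞) f) (t ζ : ℝ) :
    deriv (fun s => f (s, ζ)) t = fderiv ℝ f (t, ζ) (1, 0) :=
  (hasDerivAt_fst hf t ζ).deriv

lemma continuous_deriv_snd {f : ℝ × ℝ → ℂ} (hf : ContDiff ℝ (⊤ : ℕ∞) f) :
    Continuous (fun v : ℝ × ℝ => deriv (fun s => f (v.1, s)) v.2) := by
  have : (fun v : ℝ × ℝ => deriv (fun s => f (v.1, s)) v.2)
      = fun v : ℝ × ℝ => fderiv ℝ f v (0, 1) := by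
    funext v; exact deriv_snd_eq hf v.1 v.2
  rw [this]
  exact (hf.continuous_fderiv (by simp)).clm_apply continuous_const

lemma continuous_deriv_fst {f : ℝ × ℝ → ℂ} (hf : ContDiff ℝ (⊤ : ℕ∞) f) :
    Continuous (fun v : ℝ × ℝ => deriv (fun s => f (s, v.2)) v.1) := by
  have : (fun v : ℝ × ℝ => deriv (fun s => f (s, v.2)) v.1)
      = fun v : ℝ × ℝ => fderiv ℝ f v (1, 0) := by
    funext v; exact deriv_fst_eq hf v.1 v.2
  rw [this]
  exact (hf.continuous_fderiv (by simp)).clm_apply continuous_const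

/-- translation of an integrable function. -/
lemma integrableOn_shift {f : ℝ → ℂ} (hc : Continuous f)
    (hf : IntegrableOn f (Set.Iic (0:ℝ))) (x : ℝ) :
    IntegrableOn (fun t => f (t + x)) (Set.Iic (0:ℝ)) := by
  have h1 : IntegrableOn f (Set.Iic x) := by
    have hsub : Set.Iic x ⊆ Set.Iic (0:ℝ) ∪ Set.Icc (0:ℝ) x := by
      intro t ht
      rcases le_or_gt t 0 with h | h
      · exact Or.inl h
      · exact Or.inr ⟨h.le, ht⟩
    exact (hf.union (hc.integrableOn_Icc)).mono_set hsub
  have hmp : MeasurePreserving (fun t : ℝ => t + x) volume volume :=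
    measurePreserving_add_right volume x
  have hemb : MeasurableEmbedding (fun t : ℝ => t + x) :=
    (MeasurableEquiv.addRight x).measurableEmbedding
  have hpre : (fun t : ℝ => t + x) ⁻¹' Set.Iic x = Set.Iic (0:ℝ) := by
    ext t; simp
  have := (hmp.integrableOn_comp_preimage hemb (f := f) (s := Set.Iic x)).mpr h1
  rwa [hpre] at this

/-- FTC on `(-∞,0]`. -/
lemma ftc_key {f f' : ℝ → ℂ} (hd : ∀ t, HasDerivAt f (f' t) t)
    (hint : IntegrableOn f' (Set.Iic (0:ℝ))) (hlim : Tendsto f atBot (nhds 0)) :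
    ∫ t in Set.Iic (0:ℝ), f' t = f 0 := by
  have := integral_Iic_of_hasDerivAt_of_tendsto' (a := (0:ℝ))
    (fun t _ => hd t) hint hlim
  simpa using this

/-- associativity of `conv` via Fubini. -/
lemma conv_assoc (a b c : Ker m) (z ζ : ℝ)
    (ha : ∀ i k, IInt fun η => a z η i k)
    (hbj : ∀ k l, Continuous fun v : ℝ × ℝ => b v.1 v.2 k l)
    (Cb : ℝ) (hbC : ∀ η ξ k l, ‖b η ξ k l‖ ≤ Cb)
    (hc : ∀ k j, IInt fun ξ => c ξ ζ k j) :
    conv (conv a b) c z ζ = conv a (conv b c) z ζ := by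
  ext i j
  have hab : ∀ (ξ : ℝ) (k : Fin m), IInt (fun η => (a z η * b η ξ) i k) := by
    intro ξ k
    have he : (fun η => (a z η * b η ξ) i k) = fun η => ∑ l, a z η i l * b η ξ l k := by
      funext η; simp [Matrix.mul_apply]
    rw [he]
    exact IInt.sum fun l _ => (ha i l).mul_CB
      ⟨(hbj l k).comp (continuous_id.prodMk continuous_const), Cb, fun η => hbC η ξ l k⟩
  have hbc : ∀ (η : ℝ) (k : Fin m), IInt (fun ξ => (b η ξ * c ξ ζ) k j) := by
    intro η k
    have he : (fun ξ => (b η ξ * c ξ ζ) k j) = fun ξ => ∑ l, b η ξ k l * c ξ ζ l j := by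
      funext ξ; simp [Matrix.mul_apply]
    rw [he]
    exact IInt.sum fun l _ => CB.mul_IInt
      ⟨(hbj k l).comp (continuous_const.prodMk continuous_id), Cb, fun ξ => hbC η ξ k l⟩
      (hc l j)
  have step1 : ∀ ξ : ℝ, ((conv a b) z ξ * c ξ ζ) i j
      = ∫ η in Set.Iic (0:ℝ), ((a z η * b η ξ) * c ξ ζ) i j := by
    intro ξ
    rw [Matrix.mul_apply]
    calc ∑ k, conv a b z ξ i k * c ξ ζ k j
        = ∑ k, ∫ η in Set.Iic (0:ℝ), (a z η * b η ξ) i k * c ξ ζ k j := by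
          refine Finset.sum_congr rfl fun k _ => ?_
          rw [conv_apply, ← integral_mul_const]
      _ = ∫ η in Set.Iic (0:ℝ), ∑ k, (a z η * b η ξ) i k * c ξ ζ k j :=
          (integral_finset_sum _ fun k _ => ((hab ξ k).2.mul_const _)).symm
      _ = ∫ η in Set.Iic (0:ℝ), ((a z η * b η ξ) * c ξ ζ) i j := by
          refine integral_congr_ae (ae_of_all _ fun η => ?_)
          exact (Matrix.mul_apply).symm
  have step3 : ∀ η : ℝ, ∫ ξ in Set.Iic (0:ℝ), ((a z η * b η ξ) * c ξ ζ) i j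
      = (a z η * conv b c η ζ) i j := by
    intro η
    have he : ∀ ξ : ℝ, ((a z η * b η ξ) * c ξ ζ) i j
        = ∑ k, a z η i k * (b η ξ * c ξ ζ) k j := by
      intro ξ; rw [Matrix.mul_assoc, Matrix.mul_apply]
    calc ∫ ξ in Set.Iic (0:ℝ), ((a z η * b η ξ) * c ξ ζ) i j
        = ∫ ξ in Set.Iic (0:ℝ), ∑ k, a z η i k * (b η ξ * c ξ ζ) k j :=
          integral_congr_ae (ae_of_all _ fun ξ => he ξ)
      _ = ∑ k, ∫ ξ in Set.Iic (0:ℝ), a z η i k * (b η ξ * c ξ ζ) k j := by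
          refine integral_finset_sum _ fun k _ => ?_
          exact ((hbc η k).2.const_mul _)
      _ = ∑ k, a z η i k * ∫ ξ in Set.Iic (0:ℝ), (b η ξ * c ξ ζ) k j := by
          refine Finset.sum_congr rfl fun k _ => integral_const_mul _ _
      _ = (a z η * conv b c η ζ) i j := by rw [Matrix.mul_apply]; rfl
  have haes : AEStronglyMeasurable
      (Function.uncurry fun ξ η => ((a z η * b η ξ) * c ξ ζ) i j)
      ((volume.restrict (Set.Iic (0:ℝ))).prod (volume.restrict (Set.Iic (0:ℝ)))) := by
    have : Continuous fun q : ℝ × ℝ => ((a z q.2 * b q.2 q.1) * c q.1 ζ) i j := by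
      simp only [Matrix.mul_apply]
      refine continuous_finset_sum _ fun k _ => Continuous.mul ?_ ((hc k j).1.comp continuous_fst)
      refine continuous_finset_sum _ fun l _ => Continuous.mul
        ((ha i l).1.comp continuous_snd)
        ((hbj l k).comp (continuous_snd.prodMk continuous_fst))
    exact this.aestronglyMeasurable
  have hint : Integrable (Function.uncurry fun ξ η => ((a z η * b η ξ) * c ξ ζ) i j)
      ((volume.restrict (Set.Iic (0:ℝ))).prod (volume.restrict (Set.Iic (0:ℝ)))) := by
    have hint1 : Integrable (fun ξ => ∑ k, ‖c ξ ζ k j‖)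
        (volume.restrict (Set.Iic (0:ℝ))) :=
      MeasureTheory.integrable_finset_sum _ fun k _ => (hc k j).2.norm
    have hint2 : Integrable (fun η => ∑ l, ‖a z η i l‖ * Cb)
        (volume.restrict (Set.Iic (0:ℝ))) :=
      MeasureTheory.integrable_finset_sum _ fun l _ => ((ha i l).2.norm.mul_const Cb)
    refine (hint1.mul_prod hint2).mono' haes (ae_of_all _ fun q => ?_)
    calc ‖((a z q.2 * b q.2 q.1) * c q.1 ζ) i j‖
        = ‖∑ k, (a z q.2 * b q.2 q.1) i k * c q.1 ζ k j‖ := by rw [Matrix.mul_apply]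
      _ ≤ ∑ k, ‖(a z q.2 * b q.2 q.1) i k * c q.1 ζ k j‖ := norm_sum_le _ _
      _ ≤ ∑ k, (∑ l, ‖a z q.2 i l‖ * Cb) * ‖c q.1 ζ k j‖ := by
          refine Finset.sum_le_sum fun k _ => ?_
          rw [norm_mul]
          refine mul_le_mul_of_nonneg_right ?_ (norm_nonneg _)
          calc ‖(a z q.2 * b q.2 q.1) i k‖
              = ‖∑ l, a z q.2 i l * b q.2 q.1 l k‖ := by rw [Matrix.mul_apply]
            _ ≤ ∑ l, ‖a z q.2 i l * b q.2 q.1 l k‖ := norm_sum_le _ _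
            _ ≤ ∑ l, ‖a z q.2 i l‖ * Cb := by
                refine Finset.sum_le_sum fun l _ => ?_
                rw [norm_mul]
                exact mul_le_mul_of_nonneg_left (hbC q.2 q.1 l k) (norm_nonneg _)
      _ = (∑ k, ‖c q.1 ζ k j‖) * (∑ l, ‖a z q.2 i l‖ * Cb) := by
          rw [← Finset.mul_sum, mul_comm]
  calc conv (conv a b) c z ζ i j
      = ∫ ξ in Set.Iic (0:ℝ), ((conv a b) z ξ * c ξ ζ) i j := rfl
    _ = ∫ ξ in Set.Iic (0:ℝ), ∫ η in Set.Iic (0:ℝ), ((a z η * b η ξ) * c ξ ζ) i j :=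
        integral_congr_ae (ae_of_all _ fun ξ => step1 ξ)
    _ = ∫ η in Set.Iic (0:ℝ), ∫ ξ in Set.Iic (0:ℝ), ((a z η * b η ξ) * c ξ ζ) i j :=
        integral_integral_swap hint
    _ = ∫ η in Set.Iic (0:ℝ), (a z η * conv b c η ζ) i j :=
        integral_congr_ae (ae_of_all _ fun η => step3 η)
    _ = conv a (conv b c) z ζ i j := rfl


end NCKP

namespace NCKP

variable {m : ℕ}

lemma pder00_xder0 {w : ℝ → Ker m} (x : ℝ) : pder 0 0 (xder 0 w x) = w x := by
  funext z ζ; ext i j; simp [pder, xder]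

/-- joint continuity of low-order partial derivatives of a scattering function -/
lemma pder_joint_cont {p : Ker m} (hp : IsScattering p) :
    (∀ k l, Continuous fun v : ℝ × ℝ => pder 0 0 p v.1 v.2 k l) ∧
    (∀ k l, Continuous fun v : ℝ × ℝ => pder 1 0 p v.1 v.2 k l) ∧
    (∀ k l, Continuous fun v : ℝ × ℝ => pder 0 1 p v.1 v.2 k l) := by
  refine ⟨fun k l => ?_, fun k l => ?_, fun k l => ?_⟩
  · have : (fun v : ℝ × ℝ => pder 0 0 p v.1 v.2 k l) = fun v : ℝ × ℝ => p v.1 v.2 k l := by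
      funext v; exact pder_zero_zero p v.1 v.2 k l
    rw [this]; exact (hp.1 k l).continuous
  · have : (fun v : ℝ × ℝ => pder 1 0 p v.1 v.2 k l)
        = fun v : ℝ × ℝ => deriv (fun s => (fun w : ℝ × ℝ => p w.1 w.2 k l) (s, v.2)) v.1 := by
      funext v; exact pder_one_zero p v.1 v.2 k l
    rw [this]; exact continuous_deriv_fst (hp.1 k l)
  · have : (fun v : ℝ × ℝ => pder 0 1 p v.1 v.2 k l)
        = fun v : ℝ × ℝ => deriv (fun s => (fun w : ℝ × ℝ => p w.1 w.2 k l) (v.1, s)) v.2 := by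
      funext v; exact pder_zero_one p v.1 v.2 k l
    rw [this]; exact continuous_deriv_snd (hp.1 k l)

/-- basic slice facts for shifted kernels -/
lemma pSh_facts {p : Ker m} (hp : IsScattering p) (x : ℝ) (a b : ℕ)
    (hj : ∀ k l, Continuous fun v : ℝ × ℝ => pder a b p v.1 v.2 k l) :
    (∀ k l, Continuous fun v : ℝ × ℝ => pSh p x a b v.1 v.2 k l) ∧
    (∃ C, ∀ z ζ k l, ‖pSh p x a b z ζ k l‖ ≤ C) ∧
    (∀ (ζ : ℝ) k l, IInt fun t => pSh p x a b t ζ k l) ∧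
    (∀ (z : ℝ) k l, IInt fun t => pSh p x a b z t k l) := by
  obtain ⟨⟨C, hC⟩, hi1, hi2, _, _⟩ := hp.2 a b
  have hjx : ∀ k l, Continuous fun v : ℝ × ℝ => pSh p x a b v.1 v.2 k l := by
    intro k l
    exact (hj k l).comp ((continuous_fst.add continuous_const).prodMk
      (continuous_snd.add continuous_const))
  refine ⟨hjx, ⟨C, fun z ζ k l => hC (z+x) (ζ+x) k l⟩, fun ζ k l => ?_, fun z k l => ?_⟩
  · have hc : Continuous fun t => pder a b p t (ζ + x) k l :=
      (hj k l).comp (continuous_id.prodMk continuous_const)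
    exact ⟨(hjx k l).comp (continuous_id.prodMk continuous_const),
      integrableOn_shift hc (hi1 (ζ+x) k l) x⟩
  · have hc : Continuous fun t => pder a b p (z + x) t k l :=
      (hj k l).comp (continuous_const.prodMk continuous_id)
    exact ⟨(hjx k l).comp (continuous_const.prodMk continuous_id),
      integrableOn_shift hc (hi2 (z+x) k l) x⟩

/-- slice facts for a resolvent kernel -/
lemma res_facts {w : ℝ → Ker m}
    (hsm : ∀ i j : Fin m, ContDiff ℝ (⊤ : ℕ∞) (fun v : ℝ × ℝ × ℝ => w v.1 v.2.1 v.2.2 i j))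
    (hdec : ∀ (n a b : ℕ) (x' : ℝ), KernelDecay (pder a b (xder n w x'))) (x : ℝ) :
    (∀ k l, Continuous fun v : ℝ × ℝ => w x v.1 v.2 k l) ∧
    (∃ C, ∀ z ζ k l, ‖w x z ζ k l‖ ≤ C) ∧
    (∀ (ζ : ℝ) k l, IInt fun t => w x t ζ k l) ∧
    (∀ (z : ℝ) k l, IInt fun t => w x z t k l) ∧
    (∀ (ζ : ℝ) k l, Tendsto (fun t => w x t ζ k l) atBot (nhds 0)) ∧
    (∀ (z : ℝ) k l, Tendsto (fun t => w x z t k l) atBot (nhds 0)) := by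
  have hd := hdec 0 0 0 x
  rw [pder00_xder0] at hd
  obtain ⟨⟨C, hC⟩, h1, h2, h3, h4⟩ := hd
  have hjx : ∀ k l, Continuous fun v : ℝ × ℝ => w x v.1 v.2 k l := by
    intro k l
    exact (hsm k l).continuous.comp
      (continuous_const.prodMk (continuous_fst.prodMk continuous_snd))
  exact ⟨hjx, ⟨C, hC⟩,
    fun ζ k l => ⟨(hjx k l).comp (continuous_id.prodMk continuous_const), h1 ζ k l⟩,
    fun z k l => ⟨(hjx k l).comp (continuous_const.prodMk continuous_id), h2 z k l⟩,
    h3, h4⟩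

/-- `∂₂ pSh 0 0 = pSh 0 1` and `∂₁ pSh 0 0 = pSh 1 0`, as `HasDerivAt` facts. -/
lemma pSh_hasDerivAt_snd {p : Ker m} (hp : IsScattering p) (x z t : ℝ) (k l : Fin m) :
    HasDerivAt (fun s => pSh p x 0 0 z s k l) (pSh p x 0 1 z t k l) t := by
  have h := hasDerivAt_snd (hp.1 k l) (z + x) (t + x)
  have h3 := HasDerivAt.comp_add_const t x h
  have hfe : (fun s => pSh p x 0 0 z s k l)
      = (fun s : ℝ => p (z + x) (s + x) k l) := by
    funext s; exact pder_zero_zero p (z+x) (s+x) k l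
  rw [hfe]
  have hval : pSh p x 0 1 z t k l
      = fderiv ℝ (fun v : ℝ × ℝ => p v.1 v.2 k l) (z + x, t + x) (0, 1) := by
    rw [show pSh p x 0 1 z t k l = deriv (fun s => p (z+x) s k l) (t+x) from
      pder_zero_one p (z+x) (t+x) k l]
    exact (hasDerivAt_snd (hp.1 k l) (z+x) (t+x)).deriv
  rw [hval]
  simpa using h3

lemma pSh_hasDerivAt_fst {p : Ker m} (hp : IsScattering p) (x t ζ : ℝ) (k l : Fin m) :
    HasDerivAt (fun s => pSh p x 0 0 s ζ k l) (pSh p x 1 0 t ζ k l) t := by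
  have h := hasDerivAt_fst (hp.1 k l) (t + x) (ζ + x)
  have h3 := HasDerivAt.comp_add_const t x h
  have hfe : (fun s => pSh p x 0 0 s ζ k l)
      = (fun s : ℝ => p s (ζ + x) k l) ∘ (fun s : ℝ => s + x) := by
    funext s; exact pder_zero_zero p (s+x) (ζ+x) k l
  rw [hfe]
  have hval : pSh p x 1 0 t ζ k l
      = fderiv ℝ (fun v : ℝ × ℝ => p v.1 v.2 k l) (t + x, ζ + x) (1, 0) := by
    rw [show pSh p x 1 0 t ζ k l = deriv (fun s => p s (ζ+x) k l) (t+x) from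
      pder_one_zero p (t+x) (ζ+x) k l]
    exact (hasDerivAt_fst (hp.1 k l) (t+x) (ζ+x)).deriv
  rw [hval]
  exact h3


end NCKP

namespace NCKP

variable {m : ℕ}

/-- The core computation, with abstract kernels. -/
lemma core {W M Q0 Q1 Q2 : Ker m}
    (hQ0j : ∀ k l, Continuous fun v : ℝ × ℝ => Q0 v.1 v.2 k l)
    (C0 : ℝ) (hC0 : ∀ z ζ k l, ‖Q0 z ζ k l‖ ≤ C0)
    (hQ1j : ∀ k l, Continuous fun v : ℝ × ℝ => Q1 v.1 v.2 k l)
    (C1 : ℝ) (hC1 : ∀ z ζ k l, ‖Q1 z ζ k l‖ ≤ C1)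
    (hQ2j : ∀ k l, Continuous fun v : ℝ × ℝ => Q2 v.1 v.2 k l)
    (C2 : ℝ) (hC2 : ∀ z ζ k l, ‖Q2 z ζ k l‖ ≤ C2)
    (hQ1iR : ∀ (ζ : ℝ) k l, IInt fun t => Q1 t ζ k l)
    (hQ1iC : ∀ (z : ℝ) k l, IInt fun t => Q1 z t k l)
    (hQ2iR : ∀ (ζ : ℝ) k l, IInt fun t => Q2 t ζ k l)
    (hQ2iC : ∀ (z : ℝ) k l, IInt fun t => Q2 z t k l)
    (hWj : ∀ k l, Continuous fun v : ℝ × ℝ => W v.1 v.2 k l)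
    (CW : ℝ) (hCW : ∀ z ζ k l, ‖W z ζ k l‖ ≤ CW)
    (hWiR : ∀ (ζ : ℝ) k l, IInt fun t => W t ζ k l)
    (hWiC : ∀ (z : ℝ) k l, IInt fun t => W z t k l)
    (hWtC : ∀ (z : ℝ) k l, Tendsto (fun t => W z t k l) atBot (nhds 0))
    (hMj : ∀ k l, Continuous fun v : ℝ × ℝ => M v.1 v.2 k l)
    (CM : ℝ) (hCM : ∀ z ζ k l, ‖M z ζ k l‖ ≤ CM)
    (hMiR : ∀ (ζ : ℝ) k l, IInt fun t => M t ζ k l)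
    (hMiC : ∀ (z : ℝ) k l, IInt fun t => M z t k l)
    (hMtC : ∀ (z : ℝ) k l, Tendsto (fun t => M z t k l) atBot (nhds 0))
    (hQ02 : ∀ (z t : ℝ) k l, HasDerivAt (fun s => Q0 z s k l) (Q2 z t k l) t)
    (hQ01 : ∀ (t ζ : ℝ) k l, HasDerivAt (fun s => Q0 s ζ k l) (Q1 t ζ k l) t)
    (hWeqR : W = Q0 + conv W Q0) (hWeqL : W = Q0 + conv Q0 W)
    (hMeqR : M = -Q0 - conv M Q0) (hMeqL : M = -Q0 - conv Q0 M)
    (z ζ : ℝ) :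
    ((W - M) z 0) * ((W - M) 0 ζ)
      = (vAv W (Q1 + Q2) W - vAv M (Q1 + Q2) M) z ζ
        + (vAv W (Q1 - Q2) M - vAv M (Q1 - Q2) W) z ζ := by
  -- CB slice helpers
  have hWcbC : ∀ (z' : ℝ) i k, CB fun ξ => W z' ξ i k := fun z' i k =>
    ⟨(hWj i k).comp (continuous_const.prodMk continuous_id), CW, fun t => hCW z' t i k⟩
  have hWcbR : ∀ (ζ' : ℝ) k j, CB fun ξ => W ξ ζ' k j := fun ζ' k j =>
    ⟨(hWj k j).comp (continuous_id.prodMk continuous_const), CW, fun t => hCW t ζ' k j⟩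
  have hMcbC : ∀ (z' : ℝ) i k, CB fun ξ => M z' ξ i k := fun z' i k =>
    ⟨(hMj i k).comp (continuous_const.prodMk continuous_id), CM, fun t => hCM z' t i k⟩
  have hMcbR : ∀ (ζ' : ℝ) k j, CB fun ξ => M ξ ζ' k j := fun ζ' k j =>
    ⟨(hMj k j).comp (continuous_id.prodMk continuous_const), CM, fun t => hCM t ζ' k j⟩
  have hQ1cbC : ∀ (z' : ℝ) i k, CB fun ξ => Q1 z' ξ i k := fun z' i k =>
    ⟨(hQ1j i k).comp (continuous_const.prodMk continuous_id), C1, fun t => hC1 z' t i k⟩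
  have hQ1cbR : ∀ (ζ' : ℝ) k j, CB fun ξ => Q1 ξ ζ' k j := fun ζ' k j =>
    ⟨(hQ1j k j).comp (continuous_id.prodMk continuous_const), C1, fun t => hC1 t ζ' k j⟩
  have hQ2cbC : ∀ (z' : ℝ) i k, CB fun ξ => Q2 z' ξ i k := fun z' i k =>
    ⟨(hQ2j i k).comp (continuous_const.prodMk continuous_id), C2, fun t => hC2 z' t i k⟩
  have hQ2cbR : ∀ (ζ' : ℝ) k j, CB fun ξ => Q2 ξ ζ' k j := fun ζ' k j =>
    ⟨(hQ2j k j).comp (continuous_id.prodMk continuous_const), C2, fun t => hC2 t ζ' k j⟩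
  -- derivative identities for the resolvent kernels
  have hW2 : ∀ (z' t : ℝ) i j, HasDerivAt (fun s => W z' s i j)
      ((Q2 + conv W Q2) z' t i j) t := by
    intro z' t i j
    have hfe : (fun s => W z' s i j) = fun s => Q0 z' s i j + conv W Q0 z' s i j := by
      funext s
      conv_lhs => rw [hWeqR]
      rfl
    rw [hfe]
    have h2 := hasDerivAt_conv_snd W Q0 Q2 z' t i j (fun k => hWiC z' i k)
      (fun tt k => (hQ0j k j).comp (continuous_id.prodMk continuous_const))
      C0 (fun ξ tt k => hC0 ξ tt k j)
      (fun tt k => (hQ2j k j).comp (continuous_id.prodMk continuous_const))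
      C2 (fun ξ tt k => hC2 ξ tt k j)
      (fun ξ tt k => hQ02 ξ tt k j)
    have h3 := (hQ02 z' t i j).add h2
    have hv : (Q2 + conv W Q2) z' t i j = Q2 z' t i j + conv W Q2 z' t i j := rfl
    rw [hv]; exact h3
  have hM2 : ∀ (z' t : ℝ) i j, HasDerivAt (fun s => M z' s i j)
      (-((Q2 + conv M Q2) z' t i j)) t := by
    intro z' t i j
    have hfe : (fun s => M z' s i j) = fun s => -(Q0 z' s i j) - conv M Q0 z' s i j := by
      funext s
      conv_lhs => rw [hMeqR]
      rfl
    rw [hfe]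
    have h2 := hasDerivAt_conv_snd M Q0 Q2 z' t i j (fun k => hMiC z' i k)
      (fun tt k => (hQ0j k j).comp (continuous_id.prodMk continuous_const))
      C0 (fun ξ tt k => hC0 ξ tt k j)
      (fun tt k => (hQ2j k j).comp (continuous_id.prodMk continuous_const))
      C2 (fun ξ tt k => hC2 ξ tt k j)
      (fun ξ tt k => hQ02 ξ tt k j)
    have h3 := ((hQ02 z' t i j).neg).sub h2
    have hv : -((Q2 + conv M Q2) z' t i j) = -(Q2 z' t i j) - conv M Q2 z' t i j := by
      have : (Q2 + conv M Q2) z' t i j = Q2 z' t i j + conv M Q2 z' t i j := rfl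
      rw [this]; ring
    rw [hv]; exact h3
  have hW1 : ∀ (t ζ' : ℝ) i j, HasDerivAt (fun s => W s ζ' i j)
      ((Q1 + conv Q1 W) t ζ' i j) t := by
    intro t ζ' i j
    have hfe : (fun s => W s ζ' i j) = fun s => Q0 s ζ' i j + conv Q0 W s ζ' i j := by
      funext s
      conv_lhs => rw [hWeqL]
      rfl
    rw [hfe]
    have h2 := hasDerivAt_conv_fst Q0 Q1 W ζ' t i j (fun k => hWiR ζ' k j)
      (fun tt k => (hQ0j i k).comp (continuous_const.prodMk continuous_id))
      C0 (fun tt ξ k => hC0 tt ξ i k)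
      (fun tt k => (hQ1j i k).comp (continuous_const.prodMk continuous_id))
      C1 (fun tt ξ k => hC1 tt ξ i k)
      (fun tt ξ k => hQ01 tt ξ i k)
    have h3 := (hQ01 t ζ' i j).add h2
    have hv : (Q1 + conv Q1 W) t ζ' i j = Q1 t ζ' i j + conv Q1 W t ζ' i j := rfl
    rw [hv]; exact h3
  have hM1 : ∀ (t ζ' : ℝ) i j, HasDerivAt (fun s => M s ζ' i j)
      (-((Q1 + conv Q1 M) t ζ' i j)) t := by
    intro t ζ' i j
    have hfe : (fun s => M s ζ' i j) = fun s => -(Q0 s ζ' i j) - conv Q0 M s ζ' i j := by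
      funext s
      conv_lhs => rw [hMeqL]
      rfl
    rw [hfe]
    have h2 := hasDerivAt_conv_fst Q0 Q1 M ζ' t i j (fun k => hMiR ζ' k j)
      (fun tt k => (hQ0j i k).comp (continuous_const.prodMk continuous_id))
      C0 (fun tt ξ k => hC0 tt ξ i k)
      (fun tt k => (hQ1j i k).comp (continuous_const.prodMk continuous_id))
      C1 (fun tt ξ k => hC1 tt ξ i k)
      (fun tt ξ k => hQ01 tt ξ i k)
    have h3 := ((hQ01 t ζ' i j).neg).sub h2
    have hv : -((Q1 + conv Q1 M) t ζ' i j) = -(Q1 t ζ' i j) - conv Q1 M t ζ' i j := by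
      have : (Q1 + conv Q1 M) t ζ' i j = Q1 t ζ' i j + conv Q1 M t ζ' i j := rfl
      rw [this]; ring
    rw [hv]; exact h3
  -- CB of convolution kernels
  have cbcWQ2 : ∀ (z' : ℝ) i k, CB fun ξ => conv W Q2 z' ξ i k := fun z' i k =>
    CB_conv_snd W Q2 z' i k (fun l => hWiC z' i l)
      (fun t l => (hQ2j l k).comp (continuous_id.prodMk continuous_const))
      (fun η l => (hQ2j l k).comp (continuous_const.prodMk continuous_id))
      C2 (fun η t l => hC2 η t l k)
  have cbcMQ2 : ∀ (z' : ℝ) i k, CB fun ξ => conv M Q2 z' ξ i k := fun z' i k =>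
    CB_conv_snd M Q2 z' i k (fun l => hMiC z' i l)
      (fun t l => (hQ2j l k).comp (continuous_id.prodMk continuous_const))
      (fun η l => (hQ2j l k).comp (continuous_const.prodMk continuous_id))
      C2 (fun η t l => hC2 η t l k)
  have cbcQ1W : ∀ (ζ' : ℝ) k j, CB fun ξ => conv Q1 W ξ ζ' k j := fun ζ' k j =>
    CB_conv_fst Q1 W ζ' k j (fun l => hWiR ζ' l j)
      (fun t l => (hQ1j k l).comp (continuous_const.prodMk continuous_id))
      (fun ξ l => (hQ1j k l).comp (continuous_id.prodMk continuous_const))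
      C1 (fun t ξ l => hC1 t ξ k l)
  have cbcQ1M : ∀ (ζ' : ℝ) k j, CB fun ξ => conv Q1 M ξ ζ' k j := fun ζ' k j =>
    CB_conv_fst Q1 M ζ' k j (fun l => hMiR ζ' l j)
      (fun t l => (hQ1j k l).comp (continuous_const.prodMk continuous_id))
      (fun ξ l => (hQ1j k l).comp (continuous_id.prodMk continuous_const))
      C1 (fun t ξ l => hC1 t ξ k l)
  have cbcQ2W : ∀ (ζ' : ℝ) k j, CB fun ξ => conv Q2 W ξ ζ' k j := fun ζ' k j =>
    CB_conv_fst Q2 W ζ' k j (fun l => hWiR ζ' l j)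
      (fun t l => (hQ2j k l).comp (continuous_const.prodMk continuous_id))
      (fun ξ l => (hQ2j k l).comp (continuous_id.prodMk continuous_const))
      C2 (fun t ξ l => hC2 t ξ k l)
  have cbcQ2M : ∀ (ζ' : ℝ) k j, CB fun ξ => conv Q2 M ξ ζ' k j := fun ζ' k j =>
    CB_conv_fst Q2 M ζ' k j (fun l => hMiR ζ' l j)
      (fun t l => (hQ2j k l).comp (continuous_const.prodMk continuous_id))
      (fun ξ l => (hQ2j k l).comp (continuous_id.prodMk continuous_const))
      C2 (fun t ξ l => hC2 t ξ k l)
  -- KInt instances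
  have kQ2W : KInt Q2 W := KInt_of_right Q2 W hQ2cbC hWiR
  have kQ2M : KInt Q2 M := KInt_of_right Q2 M hQ2cbC hMiR
  have kQ1W : KInt Q1 W := KInt_of_right Q1 W hQ1cbC hWiR
  have kQ1M : KInt Q1 M := KInt_of_right Q1 M hQ1cbC hMiR
  have kWQ1 : KInt W Q1 := KInt_of_left W Q1 hWiC hQ1cbR
  have kWQ2 : KInt W Q2 := KInt_of_left W Q2 hWiC hQ2cbR
  have kMQ1 : KInt M Q1 := KInt_of_left M Q1 hMiC hQ1cbR
  have kMQ2 : KInt M Q2 := KInt_of_left M Q2 hMiC hQ2cbR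
  have kcWQ2W : KInt (conv W Q2) W := KInt_of_right _ W cbcWQ2 hWiR
  have kcWQ2M : KInt (conv W Q2) M := KInt_of_right _ M cbcWQ2 hMiR
  have kcMQ2W : KInt (conv M Q2) W := KInt_of_right _ W cbcMQ2 hWiR
  have kcMQ2M : KInt (conv M Q2) M := KInt_of_right _ M cbcMQ2 hMiR
  have kWcQ1W : KInt W (conv Q1 W) := KInt_of_left W _ hWiC cbcQ1W
  have kWcQ1M : KInt W (conv Q1 M) := KInt_of_left W _ hWiC cbcQ1M
  have kMcQ1W : KInt M (conv Q1 W) := KInt_of_left M _ hMiC cbcQ1W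
  have kMcQ1M : KInt M (conv Q1 M) := KInt_of_left M _ hMiC cbcQ1M
  have kWcQ2W : KInt W (conv Q2 W) := KInt_of_left W _ hWiC cbcQ2W
  have kWcQ2M : KInt W (conv Q2 M) := KInt_of_left W _ hWiC cbcQ2M
  have kMcQ2W : KInt M (conv Q2 W) := KInt_of_left M _ hMiC cbcQ2W
  have kMcQ2M : KInt M (conv Q2 M) := KInt_of_left M _ hMiC cbcQ2M
  have kQ2U : KInt Q2 (W - M) := kQ2W.sub_right kQ2M
  have kcWQ2U : KInt (conv W Q2) (W - M) := kcWQ2W.sub_right kcWQ2M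
  have kcMQ2U : KInt (conv M Q2) (W - M) := kcMQ2W.sub_right kcMQ2M
  have kUQ1 : KInt (W - M) Q1 := kWQ1.sub_left kMQ1
  have kUcQ1W : KInt (W - M) (conv Q1 W) := kWcQ1W.sub_left kMcQ1W
  have kUcQ1M : KInt (W - M) (conv Q1 M) := kWcQ1M.sub_left kMcQ1M
  have kA2KU : KInt (Q2 + conv W Q2 + Q2 + conv M Q2) (W - M) :=
    ((kQ2U.add_left kcWQ2U).add_left kQ2U).add_left kcMQ2U
  have kUA1K : KInt (W - M) (Q1 + conv Q1 W + Q1 + conv Q1 M) :=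
    ((kUQ1.add_right kUcQ1W).add_right kUQ1).add_right kUcQ1M
  -- step A : FTC
  have hA : ((W - M) z 0) * ((W - M) 0 ζ)
      = conv (Q2 + conv W Q2 + Q2 + conv M Q2) (W - M) z ζ
        + conv (W - M) (Q1 + conv Q1 W + Q1 + conv Q1 M) z ζ := by
    ext i j
    have huder : ∀ (s : ℝ) i k, HasDerivAt (fun t => (W - M) z t i k)
        ((Q2 + conv W Q2 + Q2 + conv M Q2) z s i k) s := by
      intro s i k
      have h := (hW2 z s i k).fun_sub (hM2 z s i k)
      have he : (fun t => (W - M) z t i k) = fun t => W z t i k - M z t i k := rfl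
      rw [he]
      refine h.congr_deriv ?_; symm
      show (Q2 z s i k + conv W Q2 z s i k + Q2 z s i k + conv M Q2 z s i k)
        = (Q2 z s i k + conv W Q2 z s i k) - -(Q2 z s i k + conv M Q2 z s i k)
      ring
    have hvder : ∀ (s : ℝ) k j, HasDerivAt (fun t => (W - M) t ζ k j)
        ((Q1 + conv Q1 W + Q1 + conv Q1 M) s ζ k j) s := by
      intro s k j
      have h := (hW1 s ζ k j).fun_sub (hM1 s ζ k j)
      have he : (fun t => (W - M) t ζ k j) = fun t => W t ζ k j - M t ζ k j := rfl
      rw [he]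
      refine h.congr_deriv ?_; symm
      show (Q1 s ζ k j + conv Q1 W s ζ k j + Q1 s ζ k j + conv Q1 M s ζ k j)
        = (Q1 s ζ k j + conv Q1 W s ζ k j) - -(Q1 s ζ k j + conv Q1 M s ζ k j)
      ring
    have hder : ∀ s : ℝ, HasDerivAt (fun t => ((W - M) z t * (W - M) t ζ) i j)
        (((Q2 + conv W Q2 + Q2 + conv M Q2) z s * (W - M) s ζ
          + (W - M) z s * (Q1 + conv Q1 W + Q1 + conv Q1 M) s ζ) i j) s := by
      intro s
      have he : (fun t => ((W - M) z t * (W - M) t ζ) i j)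
          = fun t => ∑ k, (W - M) z t i k * (W - M) t ζ k j := by
        funext t; rw [Matrix.mul_apply]
      rw [he]
      have h := HasDerivAt.fun_sum (fun k (_ : k ∈ Finset.univ) =>
        (huder s i k).fun_mul (hvder s k j))
      refine h.congr_deriv ?_; symm
      rw [Matrix.add_apply, Matrix.mul_apply, Matrix.mul_apply, ← Finset.sum_add_distrib]
    have hint : IntegrableOn (fun s =>
        ((Q2 + conv W Q2 + Q2 + conv M Q2) z s * (W - M) s ζ
          + (W - M) z s * (Q1 + conv Q1 W + Q1 + conv Q1 M) s ζ) i j) (Set.Iic (0:ℝ)) := by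
      have he : (fun s =>
          ((Q2 + conv W Q2 + Q2 + conv M Q2) z s * (W - M) s ζ
            + (W - M) z s * (Q1 + conv Q1 W + Q1 + conv Q1 M) s ζ) i j)
          = fun s => ((Q2 + conv W Q2 + Q2 + conv M Q2) z s * (W - M) s ζ) i j
            + ((W - M) z s * (Q1 + conv Q1 W + Q1 + conv Q1 M) s ζ) i j := by
        funext s; rw [Matrix.add_apply]
      rw [he]
      exact (kA2KU z ζ i j).add (kUA1K z ζ i j)
    have htend : Tendsto (fun t => ((W - M) z t * (W - M) t ζ) i j) atBot (nhds 0) := by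
      have hb : ∀ t : ℝ, ‖((W - M) z t * (W - M) t ζ) i j‖
          ≤ ∑ k, ‖W z t i k - M z t i k‖ * (CW + CM) := by
        intro t
        calc ‖((W - M) z t * (W - M) t ζ) i j‖
            = ‖∑ k, (W z t i k - M z t i k) * (W t ζ k j - M t ζ k j)‖ := by
              rw [Matrix.mul_apply]; rfl
          _ ≤ ∑ k, ‖(W z t i k - M z t i k) * (W t ζ k j - M t ζ k j)‖ := norm_sum_le _ _
          _ ≤ ∑ k, ‖W z t i k - M z t i k‖ * (CW + CM) := by
              refine Finset.sum_le_sum fun k _ => ?_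
              rw [norm_mul]
              refine mul_le_mul_of_nonneg_left ?_ (norm_nonneg _)
              exact (norm_sub_le _ _).trans (add_le_add (hCW t ζ k j) (hCM t ζ k j))
      have hg : Tendsto (fun t => ∑ k, ‖W z t i k - M z t i k‖ * (CW + CM))
          atBot (nhds 0) := by
        have : ∀ k : Fin m, Tendsto (fun t => ‖W z t i k - M z t i k‖ * (CW + CM))
            atBot (nhds 0) := by
          intro k
          have := (((hWtC z i k).sub (hMtC z i k)).norm.mul_const (CW + CM))
          simpa using this
        have := tendsto_finset_sum (Finset.univ : Finset (Fin m)) (fun k _ => this k)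
        simpa using this
      exact squeeze_zero_norm hb hg
    have hkey := ftc_key hder hint htend
    calc ((W - M) z 0 * (W - M) 0 ζ) i j
        = ∫ s in Set.Iic (0:ℝ),
            ((Q2 + conv W Q2 + Q2 + conv M Q2) z s * (W - M) s ζ
              + (W - M) z s * (Q1 + conv Q1 W + Q1 + conv Q1 M) s ζ) i j := hkey.symm
      _ = (∫ s in Set.Iic (0:ℝ),
            ((Q2 + conv W Q2 + Q2 + conv M Q2) z s * (W - M) s ζ) i j)
          + ∫ s in Set.Iic (0:ℝ),
            ((W - M) z s * (Q1 + conv Q1 W + Q1 + conv Q1 M) s ζ) i j := by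
          rw [← integral_add (kA2KU z ζ i j) (kUA1K z ζ i j)]
          exact integral_congr_ae (ae_of_all _ fun s => Matrix.add_apply _ _ _ _)
      _ = (conv (Q2 + conv W Q2 + Q2 + conv M Q2) (W - M) z ζ
          + conv (W - M) (Q1 + conv Q1 W + Q1 + conv Q1 M) z ζ) i j := rfl
  -- step B : expansion of the two convolutions
  have hB1 : conv (Q2 + conv W Q2 + Q2 + conv M Q2) (W - M) z ζ
      = (conv Q2 W z ζ - conv Q2 M z ζ)
        + (conv (conv W Q2) W z ζ - conv (conv W Q2) M z ζ)
        + (conv Q2 W z ζ - conv Q2 M z ζ)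
        + (conv (conv M Q2) W z ζ - conv (conv M Q2) M z ζ) := by
    rw [conv_add_left ((kQ2U.add_left kcWQ2U).add_left kQ2U) kcMQ2U,
        conv_add_left (kQ2U.add_left kcWQ2U) kQ2U,
        conv_add_left kQ2U kcWQ2U,
        conv_sub_right kQ2W kQ2M,
        conv_sub_right kcWQ2W kcWQ2M,
        conv_sub_right kcMQ2W kcMQ2M]
  have hB2 : conv (W - M) (Q1 + conv Q1 W + Q1 + conv Q1 M) z ζ
      = (conv W Q1 z ζ - conv M Q1 z ζ)
        + (conv W (conv Q1 W) z ζ - conv M (conv Q1 W) z ζ)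
        + (conv W Q1 z ζ - conv M Q1 z ζ)
        + (conv W (conv Q1 M) z ζ - conv M (conv Q1 M) z ζ) := by
    rw [conv_add_right ((kUQ1.add_right kUcQ1W).add_right kUQ1) kUcQ1M,
        conv_add_right (kUQ1.add_right kUcQ1W) kUQ1,
        conv_add_right kUQ1 kUcQ1W,
        conv_sub_left kWQ1 kMQ1,
        conv_sub_left kWcQ1W kMcQ1W,
        conv_sub_left kWcQ1M kMcQ1M]
  -- step C : associativity
  have hAs1 : conv (conv W Q2) W z ζ = conv W (conv Q2 W) z ζ :=
    conv_assoc W Q2 W z ζ (fun i k => hWiC z i k) hQ2j C2 hC2 (fun k j => hWiR ζ k j)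
  have hAs2 : conv (conv W Q2) M z ζ = conv W (conv Q2 M) z ζ :=
    conv_assoc W Q2 M z ζ (fun i k => hWiC z i k) hQ2j C2 hC2 (fun k j => hMiR ζ k j)
  have hAs3 : conv (conv M Q2) W z ζ = conv M (conv Q2 W) z ζ :=
    conv_assoc M Q2 W z ζ (fun i k => hMiC z i k) hQ2j C2 hC2 (fun k j => hWiR ζ k j)
  have hAs4 : conv (conv M Q2) M z ζ = conv M (conv Q2 M) z ζ :=
    conv_assoc M Q2 M z ζ (fun i k => hMiC z i k) hQ2j C2 hC2 (fun k j => hMiR ζ k j)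
  -- step D : expansion of the right-hand side
  have hsplit1 : conv (Q1 + Q2) W = conv Q1 W + conv Q2 W := by
    funext z' ζ'; exact conv_add_left kQ1W kQ2W z' ζ'
  have hsplit2 : conv (Q1 + Q2) M = conv Q1 M + conv Q2 M := by
    funext z' ζ'; exact conv_add_left kQ1M kQ2M z' ζ'
  have hsplit3 : conv (Q1 - Q2) M = conv Q1 M - conv Q2 M := by
    funext z' ζ'; exact conv_sub_left kQ1M kQ2M z' ζ'
  have hsplit4 : conv (Q1 - Q2) W = conv Q1 W - conv Q2 W := by
    funext z' ζ'; exact conv_sub_left kQ1W kQ2W z' ζ'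
  have hexp : ∀ (u A v : Ker m), KInt u A → KInt u (conv A v) →
      vAv u A v z ζ = A z ζ + conv A v z ζ + conv u A z ζ + conv u (conv A v) z ζ := by
    intro u A v h1 h2
    show (aV A v) z ζ + conv u (aV A v) z ζ = _
    simp only [aV]
    rw [conv_add_right h1 h2]
    show A z ζ + conv A v z ζ + _ = _
    abel
  have hR1 : vAv W (Q1 + Q2) W z ζ
      = (Q1 + Q2) z ζ + (conv Q1 W z ζ + conv Q2 W z ζ)
        + (conv W Q1 z ζ + conv W Q2 z ζ)
        + (conv W (conv Q1 W) z ζ + conv W (conv Q2 W) z ζ) := by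
    rw [hexp W (Q1 + Q2) W (kWQ1.add_right kWQ2)
      (by rw [hsplit1]; exact kWcQ1W.add_right kWcQ2W)]
    rw [hsplit1, conv_add_right kWcQ1W kWcQ2W, conv_add_right kWQ1 kWQ2]
    rfl
  have hR2 : vAv M (Q1 + Q2) M z ζ
      = (Q1 + Q2) z ζ + (conv Q1 M z ζ + conv Q2 M z ζ)
        + (conv M Q1 z ζ + conv M Q2 z ζ)
        + (conv M (conv Q1 M) z ζ + conv M (conv Q2 M) z ζ) := by
    rw [hexp M (Q1 + Q2) M (kMQ1.add_right kMQ2)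
      (by rw [hsplit2]; exact kMcQ1M.add_right kMcQ2M)]
    rw [hsplit2, conv_add_right kMcQ1M kMcQ2M, conv_add_right kMQ1 kMQ2]
    rfl
  have hR3 : vAv W (Q1 - Q2) M z ζ
      = (Q1 - Q2) z ζ + (conv Q1 M z ζ - conv Q2 M z ζ)
        + (conv W Q1 z ζ - conv W Q2 z ζ)
        + (conv W (conv Q1 M) z ζ - conv W (conv Q2 M) z ζ) := by
    rw [hexp W (Q1 - Q2) M (kWQ1.sub_right kWQ2)
      (by rw [hsplit3]; exact kWcQ1M.sub_right kWcQ2M)]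
    rw [hsplit3, conv_sub_right kWcQ1M kWcQ2M, conv_sub_right kWQ1 kWQ2]
    rfl
  have hR4 : vAv M (Q1 - Q2) W z ζ
      = (Q1 - Q2) z ζ + (conv Q1 W z ζ - conv Q2 W z ζ)
        + (conv M Q1 z ζ - conv M Q2 z ζ)
        + (conv M (conv Q1 W) z ζ - conv M (conv Q2 W) z ζ) := by
    rw [hexp M (Q1 - Q2) W (kMQ1.sub_right kMQ2)
      (by rw [hsplit4]; exact kMcQ1W.sub_right kMcQ2W)]
    rw [hsplit4, conv_sub_right kMcQ1W kMcQ2W, conv_sub_right kMQ1 kMQ2]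
    rfl
  -- final assembly
  have hgoal : (vAv W (Q1 + Q2) W - vAv M (Q1 + Q2) M) z ζ
        + (vAv W (Q1 - Q2) M - vAv M (Q1 - Q2) W) z ζ
      = vAv W (Q1 + Q2) W z ζ - vAv M (Q1 + Q2) M z ζ
        + (vAv W (Q1 - Q2) M z ζ - vAv M (Q1 - Q2) W z ζ) := rfl
  rw [hA, hB1, hB2, hAs1, hAs2, hAs3, hAs4, hgoal, hR1, hR2, hR3, hR4]
  abel

end NCKP

namespace NCKP

/-- **Square of the skew solution form:** `[V]² = {V P̂₁ V} + {V P_{[1,0]} V†}`;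
explicitly, `(w₊ − w₋)(z,0)·(w₊ − w₋)(0,ζ)
 = ([[V P̂₁ V]] − [[V† P̂₁ V†]])(z,ζ) + ([[V P_{[1,0]} V†]] − [[V† P_{[1,0]} V]])(z,ζ)`
for a scattering function `p` and resolvent kernels `w₊`, `w₋` for `p`. -/
theorem skew_form_squared {m : ℕ} (p : Ker m) (hp : IsScattering p)
    (wp wm : ℝ → Ker m) (hwp : IsResolventPlus p wp) (hwm : IsResolventMinus p wm)
    (x : ℝ) :
    ∀ z ∈ Set.Iic (0:ℝ), ∀ ζ ∈ Set.Iic (0:ℝ),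
      ((wp x - wm x) z 0) * ((wp x - wm x) 0 ζ)
      =
      (vAv (wp x) (pHat1 p x) (wp x) - vAv (wm x) (pHat1 p x) (wm x)) z ζ
      + (vAv (wp x) (pBr p x 1 0) (wm x) - vAv (wm x) (pBr p x 1 0) (wp x)) z ζ := by
  intro z _ ζ _
  obtain ⟨hpj0, hpj10, hpj01⟩ := pder_joint_cont hp
  obtain ⟨hQ0j, ⟨C0, hC0⟩, hQ0iR, hQ0iC⟩ := pSh_facts hp x 0 0 hpj0
  obtain ⟨hQ1j, ⟨C1, hC1⟩, hQ1iR, hQ1iC⟩ := pSh_facts hp x 1 0 hpj10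
  obtain ⟨hQ2j, ⟨C2, hC2⟩, hQ2iR, hQ2iC⟩ := pSh_facts hp x 0 1 hpj01
  obtain ⟨hWj, ⟨CW, hCW⟩, hWiR, hWiC, hWtR, hWtC⟩ := res_facts hwp.1 hwp.2.1 x
  obtain ⟨hMj, ⟨CM, hCM⟩, hMiR, hMiC, hMtR, hMtC⟩ := res_facts hwm.1 hwm.2.1 x
  have h := core hQ0j C0 hC0 hQ1j C1 hC1 hQ2j C2 hC2 hQ1iR hQ1iC hQ2iR hQ2iC
    hWj CW hCW hWiR hWiC hWtC hMj CM hCM hMiR hMiC hMtC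
    (fun z' t k l => pSh_hasDerivAt_snd hp x z' t k l)
    (fun t ζ' k l => pSh_hasDerivAt_fst hp x t ζ' k l)
    (hwp.2.2.2 x) (hwp.2.2.1 x) (hwm.2.2.2 x) (hwm.2.2.1 x) z ζ
  exact h

end NCKP
end

section
/- From the log-potential mKP equation to the amKP form (equations (1.2) ⇒ (1.3)). Let q : ℝ³ → GL_m(ℂ) be smooth (pointwise invertible m×m matrices, coordinates (x,y,t)), and let s : ℝ³ → ℂ^{m×m} be smooth with ∂_x s = ∂_y(q^{-1}q_y + (q^{-1}q_x)²), where subscripts denote partial derivatives. Suppose q satisfies the log-potential mKP equation q·s = (1/3)(q_t − q_{xxx}) + q_x q^{-1} q_{xx} + q_x q^{-1} q_y + q_y q^{-1} q_x. Then ĝ := q_x q^{-1} and f̂ := q_y q^{-1} satisfy the non-commutative modified KP equations in the form: f̂_x = ĝ_y + [ĝ, f̂], and f̂_y = (1/3)(ĝ_t − ĝ_{xxx}) + 2 ĝ ĝ_x ĝ + {f̂, ĝ_x} + [ĝ, ĝ_{xx}] − [ĝ², f̂]. -/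
open MeasureTheory Filter

namespace NCKP

/-- `∂_x^c ∂_y^d ∂_t^e` of a matrix-valued function of `(x,y,t)`, entrywise. -/
noncomputable def D3 {m : ℕ} (c d e : ℕ) (u : ℝ → ℝ → ℝ → Mat m) : ℝ → ℝ → ℝ → Mat m :=
  fun x y t => Matrix.of fun i j =>
    iteratedDeriv c (fun x' =>
      iteratedDeriv d (fun y' =>
        iteratedDeriv e (fun t' => u x' y' t' i j) t) y) x

/-- Entrywise smoothness of a matrix-valued function of `(x,y,t)`. -/
def Smooth3 {m : ℕ} (u : ℝ → ℝ → ℝ → Mat m) : Prop :=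
  ∀ i j : Fin m, ContDiff ℝ (⊤ : ℕ∞) (fun v : ℝ × ℝ × ℝ => u v.1 v.2.1 v.2.2 i j)

end NCKP

namespace NCKP

/-! ### Auxiliary infrastructure -/

variable {m : ℕ}

/-- Directional partial derivative of a matrix-valued function on `ℝ×ℝ×ℝ`, entrywise. -/
noncomputable def PD (w : ℝ×ℝ×ℝ) (U : ℝ×ℝ×ℝ → Mat m) : ℝ×ℝ×ℝ → Mat m :=
  fun p => Matrix.of fun i j => fderiv ℝ (fun z => U z i j) p w

/-- Entrywise smoothness on `ℝ×ℝ×ℝ`. -/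
def Sm (U : ℝ×ℝ×ℝ → Mat m) : Prop := ∀ i j, ContDiff ℝ (⊤:ℕ∞) (fun p => U p i j)

lemma PD_apply (w : ℝ×ℝ×ℝ) (U : ℝ×ℝ×ℝ → Mat m) (p : ℝ×ℝ×ℝ) (i j : Fin m) :
    PD w U p i j = fderiv ℝ (fun z => U z i j) p w := rfl

lemma Sm.diffEntry {U : ℝ×ℝ×ℝ → Mat m} (hU : Sm U) (i j : Fin m) (p : ℝ×ℝ×ℝ) :
    DifferentiableAt ℝ (fun z => U z i j) p :=
  ((hU i j).differentiable (by simp)).differentiableAt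

lemma Sm.add {U V : ℝ×ℝ×ℝ → Mat m} (hU : Sm U) (hV : Sm V) : Sm (fun p => U p + V p) := by
  intro i j
  simpa [Matrix.add_apply] using (hU i j).add (hV i j)

lemma Sm.neg {U : ℝ×ℝ×ℝ → Mat m} (hU : Sm U) : Sm (fun p => -U p) := by
  intro i j
  simpa using (hU i j).neg

lemma Sm.sub {U V : ℝ×ℝ×ℝ → Mat m} (hU : Sm U) (hV : Sm V) : Sm (fun p => U p - V p) := by
  intro i j
  simpa [Matrix.sub_apply] using (hU i j).sub (hV i j)

lemma Sm.smul {U : ℝ×ℝ×ℝ → Mat m} (hU : Sm U) (c : ℂ) : Sm (fun p => c • U p) := by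
  intro i j
  simpa [Matrix.smul_apply, smul_eq_mul] using (contDiff_const (c := c)).mul (hU i j)

lemma Sm.mul {U V : ℝ×ℝ×ℝ → Mat m} (hU : Sm U) (hV : Sm V) : Sm (fun p => U p * V p) := by
  intro i j
  have h : (fun p => (U p * V p) i j) = fun p => ∑ k, U p i k * V p k j := by
    funext p; simp [Matrix.mul_apply]
  rw [h]
  exact ContDiff.sum fun k _ => (hU i k).mul (hV k j)

lemma Sm.pd {U : ℝ×ℝ×ℝ → Mat m} (hU : Sm U) (w : ℝ×ℝ×ℝ) : Sm (PD w U) := by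
  intro i j
  have h : (fun p => PD w U p i j)
      = fun p => (ContinuousLinearMap.apply ℝ ℂ w) (fderiv ℝ (fun z => U z i j) p) := rfl
  rw [h]
  exact (ContinuousLinearMap.apply ℝ ℂ w).contDiff.comp
    ((hU i j).fderiv_right (m := (⊤:ℕ∞)) (by exact_mod_cast le_top))

lemma PD_const (w : ℝ×ℝ×ℝ) (A : Mat m) : PD w (fun _ => A) = fun _ => (0 : Mat m) := by
  funext p; ext i j
  simp [PD_apply]

lemma PD_add {U V : ℝ×ℝ×ℝ → Mat m} (hU : Sm U) (hV : Sm V) (w : ℝ×ℝ×ℝ) :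
    PD w (fun p => U p + V p) = fun p => PD w U p + PD w V p := by
  funext p
  ext i j
  simp only [PD_apply, Matrix.add_apply, Matrix.of_apply]
  rw [fderiv_fun_add (hU.diffEntry i j p) (hV.diffEntry i j p)]
  rfl

lemma PD_neg {U : ℝ×ℝ×ℝ → Mat m} (w : ℝ×ℝ×ℝ) :
    PD w (fun p => -U p) = fun p => -PD w U p := by
  funext p; ext i j
  simp only [PD_apply, Matrix.neg_apply, Matrix.of_apply, fderiv_fun_neg]
  rfl

lemma PD_sub {U V : ℝ×ℝ×ℝ → Mat m} (hU : Sm U) (hV : Sm V) (w : ℝ×ℝ×ℝ) :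
    PD w (fun p => U p - V p) = fun p => PD w U p - PD w V p := by
  funext p; ext i j
  simp only [PD_apply, Matrix.sub_apply, Matrix.of_apply]
  rw [fderiv_fun_sub (hU.diffEntry i j p) (hV.diffEntry i j p)]
  rfl

lemma PD_smul {U : ℝ×ℝ×ℝ → Mat m} (hU : Sm U) (c : ℂ) (w : ℝ×ℝ×ℝ) :
    PD w (fun p => c • U p) = fun p => c • PD w U p := by
  funext p; ext i j
  simp only [PD_apply, Matrix.smul_apply, Matrix.of_apply, smul_eq_mul]
  rw [fderiv_const_mul (hU.diffEntry i j p) c]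
  rfl

lemma PD_mul {U V : ℝ×ℝ×ℝ → Mat m} (hU : Sm U) (hV : Sm V) (w : ℝ×ℝ×ℝ) :
    PD w (fun p => U p * V p) = fun p => PD w U p * V p + U p * PD w V p := by
  funext p; ext i j
  simp only [PD_apply, Matrix.add_apply, Matrix.mul_apply, Matrix.of_apply]
  rw [fderiv_fun_sum (A := fun k z => U z i k * V z k j) (fun k _ => ((hU.diffEntry i k p).mul (hV.diffEntry k j p)))]
  rw [ContinuousLinearMap.sum_apply, ← Finset.sum_add_distrib]
  refine Finset.sum_congr rfl fun k _ => ?_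
  rw [fderiv_fun_mul (hU.diffEntry i k p) (hV.diffEntry k j p)]
  simp only [ContinuousLinearMap.add_apply, ContinuousLinearMap.smul_apply, smul_eq_mul]
  ring

lemma fderiv_swap_entry {f : ℝ×ℝ×ℝ → ℂ} (hf : ContDiff ℝ (⊤:ℕ∞) f) (p v w : ℝ×ℝ×ℝ) :
    fderiv ℝ (fun z => fderiv ℝ f z v) p w = fderiv ℝ (fun z => fderiv ℝ f z w) p v := by
  have hd : ContDiff ℝ (⊤:ℕ∞) (fderiv ℝ f) :=
    hf.fderiv_right (m := (⊤:ℕ∞)) (by exact_mod_cast le_top)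
  have hdd : DifferentiableAt ℝ (fderiv ℝ f) p :=
    ((hd.differentiable (by simp)) p)
  have key : ∀ u : ℝ×ℝ×ℝ, fderiv ℝ (fun z => fderiv ℝ f z u) p
      = (fderiv ℝ (fderiv ℝ f) p).flip u := by
    intro u
    rw [fderiv_clm_apply hdd (differentiableAt_const u), fderiv_fun_const]
    simp
  rw [key v, key w]
  simp only [ContinuousLinearMap.flip_apply]
  exact (hf.contDiffAt.isSymmSndFDerivAt
    (by rw [minSmoothness_of_isRCLikeNormedField]; exact WithTop.coe_le_coe.mpr le_top)) w v

lemma PD_swap {U : ℝ×ℝ×ℝ → Mat m} (hU : Sm U) (v w : ℝ×ℝ×ℝ) :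
    PD v (PD w U) = PD w (PD v U) := by
  funext p; ext i j
  rw [PD_apply, PD_apply]
  rw [show (fun z => PD w U z i j) = fun z => fderiv ℝ (fun z' => U z' i j) z w from rfl]
  rw [show (fun z => PD v U z i j) = fun z => fderiv ℝ (fun z' => U z' i j) z v from rfl]
  exact fderiv_swap_entry (hU i j) p w v

lemma Sm.det {U : ℝ×ℝ×ℝ → Mat m} (hU : Sm U) : ContDiff ℝ (⊤:ℕ∞) (fun p => (U p).det) := by
  have h : (fun p => (U p).det)
      = fun p => ∑ σ : Equiv.Perm (Fin m), (Equiv.Perm.sign σ : ℤ) * ∏ i, U p (σ i) i := by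
    funext p
    rw [Matrix.det_apply]
    refine Finset.sum_congr rfl fun σ _ => ?_
    rw [Units.smul_def, zsmul_eq_mul]
  rw [h]
  refine ContDiff.sum fun σ _ => ?_
  exact (contDiff_const.mul (contDiff_prod fun i _ => hU (σ i) i))

lemma Sm.inverse {U : ℝ×ℝ×ℝ → Mat m} (hU : Sm U) (h : ∀ p, IsUnit (U p)) :
    Sm (fun p => Ring.inverse (U p)) := by
  intro i j
  have hdet : ∀ p, (U p).det ≠ 0 := fun p =>
    ((Matrix.isUnit_iff_isUnit_det _).mp (h p)).ne_zero
  have h1 : (fun p => Ring.inverse (U p) i j)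
      = fun p => ((U p).det)⁻¹ * ((U p).updateRow j (Pi.single i 1)).det := by
    funext p
    rw [← Matrix.nonsing_inv_eq_ringInverse, Matrix.inv_def, Matrix.smul_apply,
      Matrix.adjugate_apply, Ring.inverse_eq_inv', smul_eq_mul]
  rw [h1]
  refine ContDiff.mul (ContDiff.inv hU.det hdet) ?_
  refine Sm.det (U := fun p => (U p).updateRow j (Pi.single i 1)) ?_
  intro a b
  by_cases hab : a = j
  · simp only [Matrix.updateRow_apply, hab, if_pos rfl, if_true]
    exact contDiff_const
  · simpa [Matrix.updateRow_apply, hab] using hU a b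

lemma PD_inverse {U : ℝ×ℝ×ℝ → Mat m} (hU : Sm U) (h : ∀ p, IsUnit (U p)) (w : ℝ×ℝ×ℝ) :
    PD w (fun p => Ring.inverse (U p))
      = fun p => -(Ring.inverse (U p) * (PD w U p * Ring.inverse (U p))) := by
  have hSmR : Sm (fun p => Ring.inverse (U p)) := hU.inverse h
  have h1 : (fun p => U p * Ring.inverse (U p)) = fun _ => (1 : Mat m) := by
    funext p; exact Ring.mul_inverse_cancel _ (h p)
  have h2 : (fun p => PD w U p * Ring.inverse (U p)
      + U p * PD w (fun z => Ring.inverse (U z)) p) = fun _ => (0 : Mat m) := by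
    rw [← PD_mul hU hSmR w, h1, PD_const]
  funext p
  have h4 : PD w U p * Ring.inverse (U p) + U p * PD w (fun z => Ring.inverse (U z)) p = 0 :=
    congrFun h2 p
  rw [add_comm, add_eq_zero_iff_eq_neg] at h4
  calc PD w (fun z => Ring.inverse (U z)) p
      = Ring.inverse (U p) * (U p * PD w (fun z => Ring.inverse (U z)) p) := by
        rw [Ring.inverse_mul_cancel_left _ _ (h p)]
    _ = Ring.inverse (U p) * -(PD w U p * Ring.inverse (U p)) := by rw [h4]
    _ = -(Ring.inverse (U p) * (PD w U p * Ring.inverse (U p))) := by rw [mul_neg]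

lemma D3_x'' {u : ℝ → ℝ → ℝ → Mat m} (hu : Smooth3 u) (x y t : ℝ) :
    D3 1 0 0 u x y t = PD (1,0,0) (fun p => u p.1 p.2.1 p.2.2) (x,y,t) := by
  ext i j
  show iteratedDeriv 1 (fun x' => iteratedDeriv 0 (fun y' =>
      iteratedDeriv 0 (fun t' => u x' y' t' i j) t) y) x = _
  simp only [iteratedDeriv_zero, iteratedDeriv_one]
  have hline : HasDerivAt (fun x' : ℝ => (x', y, t)) (1, (0:ℝ), (0:ℝ)) x :=
    (hasDerivAt_id x).prodMk (hasDerivAt_const x (y, t))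
  have hf : HasFDerivAt (fun p : ℝ×ℝ×ℝ => u p.1 p.2.1 p.2.2 i j)
      (fderiv ℝ (fun p : ℝ×ℝ×ℝ => u p.1 p.2.1 p.2.2 i j) (x,y,t)) (x,y,t) :=
    (((hu i j).differentiable (by simp)) (x,y,t)).hasFDerivAt
  exact (hf.comp_hasDerivAt x hline).deriv

lemma D3_y'' {u : ℝ → ℝ → ℝ → Mat m} (hu : Smooth3 u) (x y t : ℝ) :
    D3 0 1 0 u x y t = PD (0,1,0) (fun p => u p.1 p.2.1 p.2.2) (x,y,t) := by
  ext i j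
  show iteratedDeriv 0 (fun x' => iteratedDeriv 1 (fun y' =>
      iteratedDeriv 0 (fun t' => u x' y' t' i j) t) y) x = _
  simp only [iteratedDeriv_zero, iteratedDeriv_one]
  have hline : HasDerivAt (fun y' : ℝ => (x, y', t)) ((0:ℝ), (1:ℝ), (0:ℝ)) y :=
    (hasDerivAt_const y x).prodMk ((hasDerivAt_id y).prodMk (hasDerivAt_const y t))
  have hf : HasFDerivAt (fun p : ℝ×ℝ×ℝ => u p.1 p.2.1 p.2.2 i j)
      (fderiv ℝ (fun p : ℝ×ℝ×ℝ => u p.1 p.2.1 p.2.2 i j) (x,y,t)) (x,y,t) :=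
    (((hu i j).differentiable (by simp)) (x,y,t)).hasFDerivAt
  exact (hf.comp_hasDerivAt y hline).deriv

lemma D3_t'' {u : ℝ → ℝ → ℝ → Mat m} (hu : Smooth3 u) (x y t : ℝ) :
    D3 0 0 1 u x y t = PD (0,0,1) (fun p => u p.1 p.2.1 p.2.2) (x,y,t) := by
  ext i j
  show iteratedDeriv 0 (fun x' => iteratedDeriv 0 (fun y' =>
      iteratedDeriv 1 (fun t' => u x' y' t' i j) t) y) x = _
  simp only [iteratedDeriv_zero, iteratedDeriv_one]
  have hline : HasDerivAt (fun t' : ℝ => (x, y, t')) ((0:ℝ), (0:ℝ), (1:ℝ)) t :=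
    (hasDerivAt_const t x).prodMk ((hasDerivAt_const t y).prodMk (hasDerivAt_id t))
  have hf : HasFDerivAt (fun p : ℝ×ℝ×ℝ => u p.1 p.2.1 p.2.2 i j)
      (fderiv ℝ (fun p : ℝ×ℝ×ℝ => u p.1 p.2.1 p.2.2 i j) (x,y,t)) (x,y,t) :=
    (((hu i j).differentiable (by simp)) (x,y,t)).hasFDerivAt
  exact (hf.comp_hasDerivAt t hline).deriv

lemma D3_succ_x (c : ℕ) (u : ℝ → ℝ → ℝ → Mat m) :
    D3 (c+1) 0 0 u = D3 1 0 0 (D3 c 0 0 u) := by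
  funext x y t
  ext i j
  show iteratedDeriv (c+1) _ x = iteratedDeriv 1 _ x
  simp only [D3, iteratedDeriv_zero, iteratedDeriv_one, iteratedDeriv_succ, Matrix.of_apply]

lemma D3_two (u : ℝ → ℝ → ℝ → Mat m) :
    D3 2 0 0 u = D3 1 0 0 (D3 1 0 0 u) := by
  have h0 : D3 1 0 0 u = D3 1 0 0 (D3 0 0 0 u) := D3_succ_x 0 u
  have h1 : D3 2 0 0 u = D3 1 0 0 (D3 1 0 0 (D3 0 0 0 u)) := by
    rw [show (2:ℕ) = 1+1 from rfl, D3_succ_x 1 u, h0]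
  rw [h1, ← h0]

lemma D3_three (u : ℝ → ℝ → ℝ → Mat m) :
    D3 3 0 0 u = D3 1 0 0 (D3 1 0 0 (D3 1 0 0 u)) := by
  rw [show (3:ℕ) = 2+1 from rfl, D3_succ_x 2 u, D3_two]

end NCKP

namespace NCKP

/-- **From the log-potential mKP equation to the amKP form ((1.2) ⇒ (1.3)).**
If `q` is smooth and pointwise invertible, `s` is smooth with
`∂_x s = ∂_y(q⁻¹q_y + (q⁻¹q_x)²)`, and `q` satisfies the log-potential mKP equation
`q·s = (1/3)(q_t − q_xxx) + q_x q⁻¹ q_xx + q_x q⁻¹ q_y + q_y q⁻¹ q_x`, then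
`ĝ := q_x q⁻¹` and `f̂ := q_y q⁻¹` satisfy
`f̂_x = ĝ_y + [ĝ,f̂]` and
`f̂_y = (1/3)(ĝ_t − ĝ_xxx) + 2ĝĝ_xĝ + {f̂,ĝ_x} + [ĝ,ĝ_xx] − [ĝ²,f̂]`. -/
theorem log_potential_to_amKP {m : ℕ} (q s : ℝ → ℝ → ℝ → Mat m)
    (hq : Smooth3 q) (hs : Smooth3 s)
    (hinv : ∀ x y t : ℝ, IsUnit (q x y t))
    (hsdef : ∀ x y t : ℝ, D3 1 0 0 s x y t
      = D3 0 1 0 (fun x' y' t' =>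
          Ring.inverse (q x' y' t') * D3 0 1 0 q x' y' t'
            + (Ring.inverse (q x' y' t') * D3 1 0 0 q x' y' t')
              * (Ring.inverse (q x' y' t') * D3 1 0 0 q x' y' t')) x y t)
    (hlp : ∀ x y t : ℝ, q x y t * s x y t
      = ((1:ℂ)/3) • (D3 0 0 1 q x y t - D3 3 0 0 q x y t)
        + D3 1 0 0 q x y t * Ring.inverse (q x y t) * D3 2 0 0 q x y t
        + D3 1 0 0 q x y t * Ring.inverse (q x y t) * D3 0 1 0 q x y t
        + D3 0 1 0 q x y t * Ring.inverse (q x y t) * D3 1 0 0 q x y t)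
    (gh fh : ℝ → ℝ → ℝ → Mat m)
    (hgh : ∀ x y t : ℝ, gh x y t = D3 1 0 0 q x y t * Ring.inverse (q x y t))
    (hfh : ∀ x y t : ℝ, fh x y t = D3 0 1 0 q x y t * Ring.inverse (q x y t)) :
    (∀ x y t : ℝ, D3 1 0 0 fh x y t
      = D3 0 1 0 gh x y t + (gh x y t * fh x y t - fh x y t * gh x y t)) ∧
    (∀ x y t : ℝ, D3 0 1 0 fh x y t
      = ((1:ℂ)/3) • (D3 0 0 1 gh x y t - D3 3 0 0 gh x y t)
        + (2:ℕ) • (gh x y t * D3 1 0 0 gh x y t * gh x y t)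
        + (fh x y t * D3 1 0 0 gh x y t + D3 1 0 0 gh x y t * fh x y t)
        + (gh x y t * D3 2 0 0 gh x y t - D3 2 0 0 gh x y t * gh x y t)
        - ((gh x y t * gh x y t) * fh x y t - fh x y t * (gh x y t * gh x y t))) := by
  classical
  set Q : ℝ×ℝ×ℝ → Mat m := fun p => q p.1 p.2.1 p.2.2 with hQdef
  set S : ℝ×ℝ×ℝ → Mat m := fun p => s p.1 p.2.1 p.2.2 with hSdef
  have sQ : Sm Q := hq
  have sS : Sm S := hs
  have hUQ : ∀ p : ℝ×ℝ×ℝ, IsUnit (Q p) := fun p => hinv p.1 p.2.1 p.2.2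
  have sR : Sm (fun p => Ring.inverse (Q p)) := sQ.inverse hUQ
  have hR1 := PD_inverse sQ hUQ (1,0,0)
  have hR2 := PD_inverse sQ hUQ (0,1,0)
  have hR3 := PD_inverse sQ hUQ (0,0,1)
  have hyx : PD (0,1,0) (PD (1,0,0) Q) = PD (1,0,0) (PD (0,1,0) Q) :=
    PD_swap sQ (0,1,0) (1,0,0)
  have htx : PD (0,0,1) (PD (1,0,0) Q) = PD (1,0,0) (PD (0,0,1) Q) :=
    PD_swap sQ (0,0,1) (1,0,0)
  have B1 : D3 1 0 0 q = fun a b c => PD (1,0,0) Q (a,b,c) := by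
    funext a b c; exact D3_x'' hq a b c
  have B2 : D3 0 1 0 q = fun a b c => PD (0,1,0) Q (a,b,c) := by
    funext a b c; exact D3_y'' hq a b c
  have B3 : D3 0 0 1 q = fun a b c => PD (0,0,1) Q (a,b,c) := by
    funext a b c; exact D3_t'' hq a b c
  have B4 : D3 1 0 0 (fun a b c => PD (1,0,0) Q (a,b,c))
      = fun a b c => PD (1,0,0) (PD (1,0,0) Q) (a,b,c) := by
    funext a b c
    exact D3_x'' (u := fun a b c => PD (1,0,0) Q (a,b,c)) (sQ.pd (1,0,0)) a b c
  have B5 : D3 1 0 0 (fun a b c => PD (1,0,0) (PD (1,0,0) Q) (a,b,c))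
      = fun a b c => PD (1,0,0) (PD (1,0,0) (PD (1,0,0) Q)) (a,b,c) := by
    funext a b c
    exact D3_x'' (u := fun a b c => PD (1,0,0) (PD (1,0,0) Q) (a,b,c))
      ((sQ.pd (1,0,0)).pd (1,0,0)) a b c
  have B6 : D3 1 0 0 s = fun a b c => PD (1,0,0) S (a,b,c) := by
    funext a b c; exact D3_x'' hs a b c
  have hgh' : gh = fun a b c => PD (1,0,0) Q (a,b,c) * Ring.inverse (Q (a,b,c)) := by
    funext a b c; rw [hgh a b c, B1]
  have hfh' : fh = fun a b c => PD (0,1,0) Q (a,b,c) * Ring.inverse (Q (a,b,c)) := by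
    funext a b c; rw [hfh a b c, B2]
  subst hgh' hfh'
  have sWg : Sm (fun p => PD (1,0,0) Q p * Ring.inverse (Q p)) := (sQ.pd (1,0,0)).mul sR
  have sWf : Sm (fun p => PD (0,1,0) Q p * Ring.inverse (Q p)) := (sQ.pd (0,1,0)).mul sR
  have B8 : D3 1 0 0 (fun a b c => PD (0,1,0) Q (a,b,c) * Ring.inverse (Q (a,b,c)))
      = fun a b c => PD (1,0,0) (fun p => PD (0,1,0) Q p * Ring.inverse (Q p)) (a,b,c) := by
    funext a b c
    exact D3_x'' (u := fun a b c => PD (0,1,0) Q (a,b,c) * Ring.inverse (Q (a,b,c))) sWf a b c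
  have B9 : D3 0 1 0 (fun a b c => PD (0,1,0) Q (a,b,c) * Ring.inverse (Q (a,b,c)))
      = fun a b c => PD (0,1,0) (fun p => PD (0,1,0) Q p * Ring.inverse (Q p)) (a,b,c) := by
    funext a b c
    exact D3_y'' (u := fun a b c => PD (0,1,0) Q (a,b,c) * Ring.inverse (Q (a,b,c))) sWf a b c
  have B10 : D3 0 1 0 (fun a b c => PD (1,0,0) Q (a,b,c) * Ring.inverse (Q (a,b,c)))
      = fun a b c => PD (0,1,0) (fun p => PD (1,0,0) Q p * Ring.inverse (Q p)) (a,b,c) := by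
    funext a b c
    exact D3_y'' (u := fun a b c => PD (1,0,0) Q (a,b,c) * Ring.inverse (Q (a,b,c))) sWg a b c
  have B11 : D3 0 0 1 (fun a b c => PD (1,0,0) Q (a,b,c) * Ring.inverse (Q (a,b,c)))
      = fun a b c => PD (0,0,1) (fun p => PD (1,0,0) Q p * Ring.inverse (Q p)) (a,b,c) := by
    funext a b c
    exact D3_t'' (u := fun a b c => PD (1,0,0) Q (a,b,c) * Ring.inverse (Q (a,b,c))) sWg a b c
  have B12 : D3 1 0 0 (fun a b c => PD (1,0,0) Q (a,b,c) * Ring.inverse (Q (a,b,c)))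
      = fun a b c => PD (1,0,0) (fun p => PD (1,0,0) Q p * Ring.inverse (Q p)) (a,b,c) := by
    funext a b c
    exact D3_x'' (u := fun a b c => PD (1,0,0) Q (a,b,c) * Ring.inverse (Q (a,b,c))) sWg a b c
  have B13 : D3 1 0 0 (fun a b c =>
        PD (1,0,0) (fun p => PD (1,0,0) Q p * Ring.inverse (Q p)) (a,b,c))
      = fun a b c => PD (1,0,0) (PD (1,0,0)
          (fun p => PD (1,0,0) Q p * Ring.inverse (Q p))) (a,b,c) := by
    funext a b c
    exact D3_x'' (u := fun a b c =>
      PD (1,0,0) (fun p => PD (1,0,0) Q p * Ring.inverse (Q p)) (a,b,c))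
      (sWg.pd (1,0,0)) a b c
  have B14 : D3 1 0 0 (fun a b c =>
        PD (1,0,0) (PD (1,0,0) (fun p => PD (1,0,0) Q p * Ring.inverse (Q p))) (a,b,c))
      = fun a b c => PD (1,0,0) (PD (1,0,0) (PD (1,0,0)
          (fun p => PD (1,0,0) Q p * Ring.inverse (Q p)))) (a,b,c) := by
    funext a b c
    exact D3_x'' (u := fun a b c =>
      PD (1,0,0) (PD (1,0,0) (fun p => PD (1,0,0) Q p * Ring.inverse (Q p))) (a,b,c))
      ((sWg.pd (1,0,0)).pd (1,0,0)) a b c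
  have hlpP : ∀ p : ℝ×ℝ×ℝ, Q p * S p
      = ((1:ℂ)/3) • (PD (0,0,1) Q p - PD (1,0,0) (PD (1,0,0) (PD (1,0,0) Q)) p)
        + PD (1,0,0) Q p * Ring.inverse (Q p) * PD (1,0,0) (PD (1,0,0) Q) p
        + PD (1,0,0) Q p * Ring.inverse (Q p) * PD (0,1,0) Q p
        + PD (0,1,0) Q p * Ring.inverse (Q p) * PD (1,0,0) Q p := by
    intro p
    have h := hlp p.1 p.2.1 p.2.2
    rw [D3_three, D3_two, B1, B2, B3, B4, B5] at h
    exact h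
  have hlpF := funext hlpP
  have hinner : (fun x' y' t' =>
          Ring.inverse (q x' y' t') * D3 0 1 0 q x' y' t'
            + (Ring.inverse (q x' y' t') * D3 1 0 0 q x' y' t')
              * (Ring.inverse (q x' y' t') * D3 1 0 0 q x' y' t'))
      = fun a b c => Ring.inverse (Q (a,b,c)) * PD (0,1,0) Q (a,b,c)
            + (Ring.inverse (Q (a,b,c)) * PD (1,0,0) Q (a,b,c))
              * (Ring.inverse (Q (a,b,c)) * PD (1,0,0) Q (a,b,c)) := by
    funext a b c
    rw [B1, B2]
  have sY : Sm (fun p => Ring.inverse (Q p) * PD (0,1,0) Q p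
      + (Ring.inverse (Q p) * PD (1,0,0) Q p) * (Ring.inverse (Q p) * PD (1,0,0) Q p)) :=
    (sR.mul (sQ.pd (0,1,0))).add ((sR.mul (sQ.pd (1,0,0))).mul (sR.mul (sQ.pd (1,0,0))))
  have B7 : D3 0 1 0 (fun a b c => Ring.inverse (Q (a,b,c)) * PD (0,1,0) Q (a,b,c)
            + (Ring.inverse (Q (a,b,c)) * PD (1,0,0) Q (a,b,c))
              * (Ring.inverse (Q (a,b,c)) * PD (1,0,0) Q (a,b,c)))
      = fun a b c => PD (0,1,0) (fun p => Ring.inverse (Q p) * PD (0,1,0) Q p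
            + (Ring.inverse (Q p) * PD (1,0,0) Q p)
              * (Ring.inverse (Q p) * PD (1,0,0) Q p)) (a,b,c) := by
    funext a b c
    exact D3_y'' (u := fun a b c => Ring.inverse (Q (a,b,c)) * PD (0,1,0) Q (a,b,c)
            + (Ring.inverse (Q (a,b,c)) * PD (1,0,0) Q (a,b,c))
              * (Ring.inverse (Q (a,b,c)) * PD (1,0,0) Q (a,b,c))) sY a b c
  have hsdefPf : PD (1,0,0) S = PD (0,1,0) (fun p => Ring.inverse (Q p) * PD (0,1,0) Q p
      + (Ring.inverse (Q p) * PD (1,0,0) Q p) * (Ring.inverse (Q p) * PD (1,0,0) Q p)) := by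
    funext p
    have h := hsdef p.1 p.2.1 p.2.2
    rw [B6, hinner, B7] at h
    exact h
  constructor
  · intro x y t
    rw [B8, B10]
    simp (config := { maxDischargeDepth := 20 }) only
      [PD_mul, PD_add, PD_sub, PD_neg, PD_smul, hR1, hR2, hR3, hyx, htx,
       sQ, sR, sS, Sm.mul, Sm.add, Sm.sub, Sm.neg, Sm.smul, Sm.pd]
    simp only [mul_add, add_mul, mul_sub, sub_mul, neg_mul, mul_neg, neg_neg,
       mul_assoc, mul_one, one_mul, smul_add, smul_sub, mul_smul_comm, smul_mul_assoc,
       smul_smul, ← Nat.cast_smul_eq_nsmul ℂ, Nat.cast_ofNat]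
    module
  · intro x y t
    rw [B9, B11, D3_three, D3_two, B12, B13, B14]
    have hcl : ∀ z : Mat m, Q (x,y,t) * (Ring.inverse (Q (x,y,t)) * z) = z :=
      fun z => Ring.mul_inverse_cancel_left _ z (hUQ (x,y,t))
    have hct : Q (x,y,t) * Ring.inverse (Q (x,y,t)) = 1 :=
      Ring.mul_inverse_cancel _ (hUQ (x,y,t))
    have hS1 := hlpP (x,y,t)
    have hSv := congrArg (fun Z : Mat m => Ring.inverse (Q (x,y,t)) * Z) hS1
    beta_reduce at hSv
    rw [Ring.inverse_mul_cancel_left _ _ (hUQ (x,y,t))] at hSv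
    have hd := congrFun (congrArg (PD (m := m) ((1,0,0) : ℝ×ℝ×ℝ)) hlpF) (x,y,t)
    simp (config := { maxDischargeDepth := 20 }) only
      [PD_mul, PD_add, PD_sub, PD_neg, PD_smul, hR1, hR2, hR3, hyx, htx, hsdefPf,
       sQ, sR, sS, Sm.mul, Sm.add, Sm.sub, Sm.neg, Sm.smul, Sm.pd] at hd
    rw [hSv] at hd
    simp only [mul_add, add_mul, mul_sub, sub_mul, neg_mul, mul_neg, neg_neg,
       mul_assoc, mul_one, one_mul, smul_add, smul_sub, mul_smul_comm, smul_mul_assoc,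
       smul_smul, hcl, hct] at hd
    rw [← sub_eq_zero] at hd ⊢
    have key2 := congrArg (fun Z : Mat m => Z * Ring.inverse (Q (x,y,t))) hd
    simp only [zero_mul] at key2
    rw [← key2]
    simp (config := { maxDischargeDepth := 20 }) only
      [PD_mul, PD_add, PD_sub, PD_neg, PD_smul, hR1, hR2, hR3, hyx, htx,
       sQ, sR, sS, Sm.mul, Sm.add, Sm.sub, Sm.neg, Sm.smul, Sm.pd]
    simp only [mul_add, add_mul, mul_sub, sub_mul, neg_mul, mul_neg, neg_neg,
       mul_assoc, mul_one, one_mul, smul_add, smul_sub, mul_smul_comm, smul_mul_assoc,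
       smul_smul, ← Nat.cast_smul_eq_nsmul ℂ, Nat.cast_ofNat]
    module


end NCKP
end

section
/- From the log-potential mKP equation to the mKP form (equations (1.2) ⇒ (1.4)). Let q : ℝ³ → GL_m(ℂ) be smooth (pointwise invertible m×m matrices, coordinates (x,y,t)), and let s : ℝ³ → ℂ^{m×m} be smooth with ∂_x s = ∂_y(q^{-1}q_y + (q^{-1}q_x)²), where subscripts denote partial derivatives. Suppose q satisfies the log-potential mKP equation q·s = (1/3)(q_t − q_{xxx}) + q_x q^{-1} q_{xx} + q_x q^{-1} q_y + q_y q^{-1} q_x. Then g := q^{-1}q_x and f := q^{-1}q_y satisfy f + g² = q^{-1}q_y + (q^{-1}q_x)² (so that s plays the role of D(f + g²)), and the non-commutative modified KP equations hold in the form: f_x = g_y − [g, f], and f_y = (1/3)(g_t − g_{xxx}) + {g_x, f + g²} − [g, s]. -/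
open MeasureTheory Filter

namespace NCKP

section Aux
set_option linter.dupNamespace false
set_option linter.unusedVariables false


attribute [local instance] Matrix.linftyOpNormedAddCommGroup Matrix.linftyOpNormedRing
  Matrix.linftyOpNormedAlgebra

variable {m : ℕ}

noncomputable instance : FiniteDimensional ℝ (Mat m) := Module.Finite.trans ℂ (Mat m)
noncomputable local instance : CompleteSpace (Mat m) := FiniteDimensional.complete ℝ _

lemma topsucc : ((⊤:ℕ∞) : WithTop ℕ∞) + 1 ≤ ((⊤:ℕ∞) : WithTop ℕ∞) := by
  exact_mod_cast le_of_eq (by simp)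

/-- uncurried version -/
def U3 (u : ℝ → ℝ → ℝ → Mat m) : ℝ × ℝ × ℝ → Mat m := fun v => u v.1 v.2.1 v.2.2

/-- smoothness as a map into the normed space of matrices -/
def CD (u : ℝ → ℝ → ℝ → Mat m) : Prop := ContDiff ℝ (⊤ : ℕ∞) (U3 u)

noncomputable def entCLM (i j : Fin m) : Mat m →L[ℝ] ℂ :=
  LinearMap.toContinuousLinearMap
    { toFun := fun M => M i j, map_add' := fun _ _ => rfl, map_smul' := fun _ _ => rfl }

noncomputable def matCLM : (Fin m → Fin m → ℂ) →L[ℝ] Mat m :=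
  LinearMap.toContinuousLinearMap
    { toFun := fun f => Matrix.of f, map_add' := fun _ _ => rfl, map_smul' := fun _ _ => rfl }

lemma cd_iff (u : ℝ → ℝ → ℝ → Mat m) : Smooth3 u ↔ CD u := by
  constructor
  · intro h
    have : U3 u = fun v => matCLM (fun i j => u v.1 v.2.1 v.2.2 i j) := rfl
    rw [CD, this]
    exact matCLM.contDiff.comp (contDiff_pi.2 fun i => contDiff_pi.2 fun j => h i j)
  · intro h i j
    exact (entCLM i j).contDiff.comp h

lemma onele : ((⊤:ℕ∞) : WithTop ℕ∞) ≠ 0 := by simp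

/-- directional partial derivative -/
noncomputable def Pd (w : ℝ × ℝ × ℝ) (u : ℝ → ℝ → ℝ → Mat m) : ℝ → ℝ → ℝ → Mat m :=
  fun x y t => fderiv ℝ (U3 u) (x, y, t) w

lemma U3_Pd (w : ℝ × ℝ × ℝ) (u : ℝ → ℝ → ℝ → Mat m) :
    U3 (Pd w u) = fun v => fderiv ℝ (U3 u) v w := rfl

lemma cd_Pd {u : ℝ → ℝ → ℝ → Mat m} (w : ℝ × ℝ × ℝ) (hu : CD u) : CD (Pd w u) := by
  have : U3 (Pd w u)
      = fun v => (ContinuousLinearMap.apply ℝ (Mat m) w) (fderiv ℝ (U3 u) v) := rfl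
  rw [CD, this]
  exact (ContinuousLinearMap.apply ℝ (Mat m) w).contDiff.comp (hu.fderiv_right topsucc)

lemma cd_mul {u v : ℝ → ℝ → ℝ → Mat m} (hu : CD u) (hv : CD v) : CD (u * v) := hu.mul hv
lemma cd_add {u v : ℝ → ℝ → ℝ → Mat m} (hu : CD u) (hv : CD v) : CD (u + v) := hu.add hv
lemma cd_sub {u v : ℝ → ℝ → ℝ → Mat m} (hu : CD u) (hv : CD v) : CD (u - v) := hu.sub hv
lemma cd_neg {u : ℝ → ℝ → ℝ → Mat m} (hu : CD u) : CD (-u) := hu.neg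
lemma cd_smul {u : ℝ → ℝ → ℝ → Mat m} {c : ℂ} (hu : CD u) : CD (c • u) := hu.const_smul c

lemma Pd_add {u v : ℝ → ℝ → ℝ → Mat m} {w : ℝ × ℝ × ℝ} (hu : CD u) (hv : CD v) :
    Pd w (u + v) = Pd w u + Pd w v := by
  funext x y t
  have : fderiv ℝ (U3 (u + v)) (x, y, t) = fderiv ℝ (U3 u) (x, y, t) + fderiv ℝ (U3 v) (x, y, t) :=
    fderiv_fun_add ((hu.differentiable onele).differentiableAt)
      ((hv.differentiable onele).differentiableAt)
  show fderiv ℝ (U3 (u + v)) (x, y, t) w = _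
  rw [this]; rfl

lemma Pd_sub {u v : ℝ → ℝ → ℝ → Mat m} {w : ℝ × ℝ × ℝ} (hu : CD u) (hv : CD v) :
    Pd w (u - v) = Pd w u - Pd w v := by
  funext x y t
  have : fderiv ℝ (U3 (u - v)) (x, y, t) = fderiv ℝ (U3 u) (x, y, t) - fderiv ℝ (U3 v) (x, y, t) :=
    fderiv_fun_sub ((hu.differentiable onele).differentiableAt)
      ((hv.differentiable onele).differentiableAt)
  show fderiv ℝ (U3 (u - v)) (x, y, t) w = _
  rw [this]; rfl

lemma Pd_neg {u : ℝ → ℝ → ℝ → Mat m} {w : ℝ × ℝ × ℝ} (hu : CD u) :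
    Pd w (-u) = -Pd w u := by
  funext x y t
  have : fderiv ℝ (U3 (-u)) (x, y, t) = -fderiv ℝ (U3 u) (x, y, t) := fderiv_neg
  show fderiv ℝ (U3 (-u)) (x, y, t) w = _
  rw [this]; rfl

lemma Pd_smul {u : ℝ → ℝ → ℝ → Mat m} {w : ℝ × ℝ × ℝ} {c : ℂ} (hu : CD u) :
    Pd w (c • u) = c • Pd w u := by
  funext x y t
  have : fderiv ℝ (U3 (c • u)) (x, y, t) = c • fderiv ℝ (U3 u) (x, y, t) :=
    fderiv_fun_const_smul ((hu.differentiable onele).differentiableAt) c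
  show fderiv ℝ (U3 (c • u)) (x, y, t) w = _
  rw [this]; rfl

lemma Pd_mul {u v : ℝ → ℝ → ℝ → Mat m} {w : ℝ × ℝ × ℝ} (hu : CD u) (hv : CD v) :
    Pd w (u * v) = Pd w u * v + u * Pd w v := by
  funext x y t
  have ha := ((hu.differentiable onele).differentiableAt
    (x := ((x, y, t) : ℝ × ℝ × ℝ))).hasFDerivAt
  have hb := ((hv.differentiable onele).differentiableAt
    (x := ((x, y, t) : ℝ × ℝ × ℝ))).hasFDerivAt
  have h := (ha.mul' hb).fderiv
  show fderiv ℝ (U3 (u * v)) (x, y, t) w = _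
  have hU : U3 (u * v) = fun p => U3 u p * U3 v p := rfl
  rw [hU] at *
  erw [show (fun p => U3 u p * U3 v p) = U3 u * U3 v from rfl, h]
  show U3 u (x, y, t) * fderiv ℝ (U3 v) (x, y, t) w
    + fderiv ℝ (U3 u) (x, y, t) w * U3 v (x, y, t) = _
  exact add_comm _ _

lemma Pd_one {w : ℝ × ℝ × ℝ} : Pd w (1 : ℝ → ℝ → ℝ → Mat m) = 0 := by
  funext x y t
  have : U3 (1 : ℝ → ℝ → ℝ → Mat m) = fun _ => (1 : Mat m) := rfl
  show fderiv ℝ (U3 (1 : ℝ → ℝ → ℝ → Mat m)) (x, y, t) w = 0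
  rw [this, fderiv_fun_const]
  rfl

lemma Pd_comm {u : ℝ → ℝ → ℝ → Mat m} (w w' : ℝ × ℝ × ℝ) (hu : CD u) :
    Pd w (Pd w' u) = Pd w' (Pd w u) := by
  funext x y t
  have hdiff : ∀ v : ℝ × ℝ × ℝ, HasFDerivAt (U3 u) (fderiv ℝ (U3 u) v) v := fun v =>
    ((hu.differentiable onele) v).hasFDerivAt
  have hd2 : HasFDerivAt (fderiv ℝ (U3 u))
      (fderiv ℝ (fderiv ℝ (U3 u)) (x, y, t)) (x, y, t) :=
    (((hu.fderiv_right topsucc).differentiable onele) _).hasFDerivAt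
  have key := second_derivative_symmetric hdiff hd2 w w'
  have e1 : ∀ ww : ℝ × ℝ × ℝ, Pd ww u = fun x y t =>
      (ContinuousLinearMap.apply ℝ (Mat m) ww) (fderiv ℝ (U3 u) (x, y, t)) := fun _ => rfl
  have hcomp : ∀ ww ww' : ℝ × ℝ × ℝ,
      Pd ww (Pd ww' u) x y t = fderiv ℝ (fderiv ℝ (U3 u)) (x, y, t) ww ww' := by
    intro ww ww'
    show fderiv ℝ (U3 (Pd ww' u)) (x, y, t) ww = _
    have hU : U3 (Pd ww' u)
        = fun v => (ContinuousLinearMap.apply ℝ (Mat m) ww') (fderiv ℝ (U3 u) v) := rfl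
    rw [hU]
    have hcd := ((ContinuousLinearMap.apply ℝ (Mat m) ww').hasFDerivAt.comp
      ((x, y, t) : ℝ × ℝ × ℝ) hd2).fderiv
    exact (congrArg (fun L => L ww) hcd).trans rfl
  rw [hcomp w w', hcomp w' w]
  exact key

lemma entCLM_apply (i j : Fin m) (M : Mat m) : entCLM i j M = M i j := rfl

lemma deriv_eq_Pd1 {u : ℝ → ℝ → ℝ → Mat m} (hu : CD u) (x y t : ℝ) (i j : Fin m) :
    deriv (fun x' => u x' y t i j) x = Pd (1,0,0) u x y t i j := by
  have hd : HasFDerivAt (U3 u) (fderiv ℝ (U3 u) (x,y,t)) (x,y,t) :=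
    ((hu.differentiable onele) _).hasFDerivAt
  have hent := (entCLM i j).hasFDerivAt.comp ((x,y,t) : ℝ×ℝ×ℝ) hd
  have hline : HasDerivAt (fun x' : ℝ => ((x', y, t) : ℝ×ℝ×ℝ)) (1, 0, 0) x :=
    (hasDerivAt_id x).prodMk (hasDerivAt_const x ((y,t) : ℝ×ℝ))
  have h3 : HasDerivAt (fun x' => u x' y t i j)
      (((entCLM i j).comp (fderiv ℝ (U3 u) (x,y,t))) (1,0,0)) x :=
    by have := hent.comp_hasDerivAt x hline; exact this
  rw [h3.deriv]; rfl

lemma deriv_eq_Pd2 {u : ℝ → ℝ → ℝ → Mat m} (hu : CD u) (x y t : ℝ) (i j : Fin m) :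
    deriv (fun y' => u x y' t i j) y = Pd (0,1,0) u x y t i j := by
  have hd : HasFDerivAt (U3 u) (fderiv ℝ (U3 u) (x,y,t)) (x,y,t) :=
    ((hu.differentiable onele) _).hasFDerivAt
  have hent := (entCLM i j).hasFDerivAt.comp ((x,y,t) : ℝ×ℝ×ℝ) hd
  have hline : HasDerivAt (fun y' : ℝ => ((x, y', t) : ℝ×ℝ×ℝ)) (0, 1, 0) y :=
    (hasDerivAt_const y x).prodMk ((hasDerivAt_id y).prodMk (hasDerivAt_const y t))
  have h3 : HasDerivAt (fun y' => u x y' t i j)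
      (((entCLM i j).comp (fderiv ℝ (U3 u) (x,y,t))) (0,1,0)) y :=
    by have := hent.comp_hasDerivAt y hline; exact this
  rw [h3.deriv]; rfl

lemma deriv_eq_Pd3 {u : ℝ → ℝ → ℝ → Mat m} (hu : CD u) (x y t : ℝ) (i j : Fin m) :
    deriv (fun t' => u x y t' i j) t = Pd (0,0,1) u x y t i j := by
  have hd : HasFDerivAt (U3 u) (fderiv ℝ (U3 u) (x,y,t)) (x,y,t) :=
    ((hu.differentiable onele) _).hasFDerivAt
  have hent := (entCLM i j).hasFDerivAt.comp ((x,y,t) : ℝ×ℝ×ℝ) hd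
  have hline : HasDerivAt (fun t' : ℝ => ((x, y, t') : ℝ×ℝ×ℝ)) (0, 0, 1) t :=
    (hasDerivAt_const t x).prodMk ((hasDerivAt_const t y).prodMk (hasDerivAt_id t))
  have h3 : HasDerivAt (fun t' => u x y t' i j)
      (((entCLM i j).comp (fderiv ℝ (U3 u) (x,y,t))) (0,0,1)) t :=
    by have := hent.comp_hasDerivAt t hline; exact this
  rw [h3.deriv]; rfl

lemma D3_100 {u : ℝ → ℝ → ℝ → Mat m} (hu : CD u) : D3 1 0 0 u = Pd (1,0,0) u := by
  funext x y t; ext i j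
  simp only [D3, Matrix.of_apply, iteratedDeriv_one, iteratedDeriv_zero]
  exact deriv_eq_Pd1 hu x y t i j

lemma D3_010 {u : ℝ → ℝ → ℝ → Mat m} (hu : CD u) : D3 0 1 0 u = Pd (0,1,0) u := by
  funext x y t; ext i j
  simp only [D3, Matrix.of_apply, iteratedDeriv_one, iteratedDeriv_zero]
  exact deriv_eq_Pd2 hu x y t i j

lemma D3_001 {u : ℝ → ℝ → ℝ → Mat m} (hu : CD u) : D3 0 0 1 u = Pd (0,0,1) u := by
  funext x y t; ext i j
  simp only [D3, Matrix.of_apply, iteratedDeriv_one, iteratedDeriv_zero]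
  exact deriv_eq_Pd3 hu x y t i j

lemma iteratedDeriv_two (h : ℝ → ℂ) : iteratedDeriv 2 h = deriv (deriv h) := by
  rw [show (2:ℕ) = 1+1 by norm_num, iteratedDeriv_succ, iteratedDeriv_one]

lemma iteratedDeriv_three (h : ℝ → ℂ) : iteratedDeriv 3 h = deriv (deriv (deriv h)) := by
  rw [show (3:ℕ) = 2+1 by norm_num, iteratedDeriv_succ, iteratedDeriv_two]

lemma D3_200 {u : ℝ → ℝ → ℝ → Mat m} (hu : CD u) :
    D3 2 0 0 u = Pd (1,0,0) (Pd (1,0,0) u) := by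
  funext x y t; ext i j
  simp only [D3, Matrix.of_apply, iteratedDeriv_zero, iteratedDeriv_two]
  have hfun : deriv (fun x'' => u x'' y t i j) = fun x' => Pd (1,0,0) u x' y t i j :=
    funext fun x' => deriv_eq_Pd1 hu x' y t i j
  rw [hfun]
  exact deriv_eq_Pd1 (cd_Pd _ hu) x y t i j

lemma D3_300 {u : ℝ → ℝ → ℝ → Mat m} (hu : CD u) :
    D3 3 0 0 u = Pd (1,0,0) (Pd (1,0,0) (Pd (1,0,0) u)) := by
  funext x y t; ext i j
  simp only [D3, Matrix.of_apply, iteratedDeriv_zero, iteratedDeriv_three]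
  have hfun : deriv (fun x'' => u x'' y t i j) = fun x' => Pd (1,0,0) u x' y t i j :=
    funext fun x' => deriv_eq_Pd1 hu x' y t i j
  rw [hfun]
  have hfun2 : deriv (fun x' => Pd (1,0,0) u x' y t i j)
      = fun x' => Pd (1,0,0) (Pd (1,0,0) u) x' y t i j :=
    funext fun x' => deriv_eq_Pd1 (cd_Pd _ hu) x' y t i j
  rw [hfun2]
  exact deriv_eq_Pd1 (cd_Pd _ (cd_Pd _ hu)) x y t i j

section Inverse

variable {q : ℝ → ℝ → ℝ → Mat m}

lemma cd_inverse (hq' : CD q) (hinv : ∀ x y t : ℝ, IsUnit (q x y t)) :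
    CD (fun x y t => Ring.inverse (q x y t)) := by
  have hU : U3 (fun x y t => Ring.inverse (q x y t)) = fun v => Ring.inverse (U3 q v) := rfl
  rw [CD, hU]
  refine contDiff_iff_contDiffAt.mpr fun v => ?_
  have hu := hinv v.1 v.2.1 v.2.2
  have h1 : ContDiffAt ℝ (⊤:ℕ∞) Ring.inverse (U3 q v) := by
    have := contDiffAt_ringInverse ℝ (R := Mat m) (n := (⊤:ℕ∞)) hu.unit
    rwa [hu.unit_spec] at this
  exact h1.comp v hq'.contDiffAt

lemma q_mul_inv (hinv : ∀ x y t : ℝ, IsUnit (q x y t)) :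
    q * (fun x y t => Ring.inverse (q x y t)) = 1 := by
  funext x y t
  exact Ring.mul_inverse_cancel _ (hinv x y t)

lemma inv_mul_q (hinv : ∀ x y t : ℝ, IsUnit (q x y t)) :
    (fun x y t => Ring.inverse (q x y t)) * q = 1 := by
  funext x y t
  exact Ring.inverse_mul_cancel _ (hinv x y t)

lemma Pd_inverse (hq' : CD q) (hinv : ∀ x y t : ℝ, IsUnit (q x y t)) (w : ℝ × ℝ × ℝ) :
    Pd w (fun x y t => Ring.inverse (q x y t))
      = -((fun x y t => Ring.inverse (q x y t)) * Pd w q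
          * (fun x y t => Ring.inverse (q x y t))) := by
  set R := fun x y t => Ring.inverse (q x y t) with hR
  have cR : CD R := cd_inverse hq' hinv
  have h1 : Pd w q * R + q * Pd w R = 0 := by
    rw [← Pd_mul hq' cR, q_mul_inv hinv, Pd_one]
  have h2 : q * Pd w R = -(Pd w q * R) := eq_neg_of_add_eq_zero_right h1
  calc Pd w R = (R * q) * Pd w R := by rw [inv_mul_q hinv, one_mul]
    _ = R * (q * Pd w R) := by rw [mul_assoc]
    _ = R * -(Pd w q * R) := by rw [h2]
    _ = -(R * Pd w q * R) := by rw [mul_neg, mul_assoc]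

end Inverse

end Aux

set_option maxHeartbeats 4000000 in
/-- **From the log-potential mKP equation to the mKP form ((1.2) ⇒ (1.4)).**
If `q` is smooth and pointwise invertible, `s` is smooth with
`∂_x s = ∂_y(q⁻¹q_y + (q⁻¹q_x)²)`, and `q` satisfies the log-potential mKP equation,
then `g := q⁻¹q_x` and `f := q⁻¹q_y` satisfy `f + g² = q⁻¹q_y + (q⁻¹q_x)²`
(`s` plays the role of `D(f+g²)`), together with
`f_x = g_y − [g,f]` and `f_y = (1/3)(g_t − g_xxx) + {g_x, f+g²} − [g,s]`. -/
theorem log_potential_to_mKP {m : ℕ} (q s : ℝ → ℝ → ℝ → Mat m)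
    (hq : Smooth3 q) (hs : Smooth3 s)
    (hinv : ∀ x y t : ℝ, IsUnit (q x y t))
    (hsdef : ∀ x y t : ℝ, D3 1 0 0 s x y t
      = D3 0 1 0 (fun x' y' t' =>
          Ring.inverse (q x' y' t') * D3 0 1 0 q x' y' t'
            + (Ring.inverse (q x' y' t') * D3 1 0 0 q x' y' t')
              * (Ring.inverse (q x' y' t') * D3 1 0 0 q x' y' t')) x y t)
    (hlp : ∀ x y t : ℝ, q x y t * s x y t
      = ((1:ℂ)/3) • (D3 0 0 1 q x y t - D3 3 0 0 q x y t)
        + D3 1 0 0 q x y t * Ring.inverse (q x y t) * D3 2 0 0 q x y t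
        + D3 1 0 0 q x y t * Ring.inverse (q x y t) * D3 0 1 0 q x y t
        + D3 0 1 0 q x y t * Ring.inverse (q x y t) * D3 1 0 0 q x y t)
    (g f : ℝ → ℝ → ℝ → Mat m)
    (hgdef : ∀ x y t : ℝ, g x y t = Ring.inverse (q x y t) * D3 1 0 0 q x y t)
    (hfdef : ∀ x y t : ℝ, f x y t = Ring.inverse (q x y t) * D3 0 1 0 q x y t) :
    (∀ x y t : ℝ, f x y t + g x y t * g x y t
      = Ring.inverse (q x y t) * D3 0 1 0 q x y t
        + (Ring.inverse (q x y t) * D3 1 0 0 q x y t)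
          * (Ring.inverse (q x y t) * D3 1 0 0 q x y t)) ∧
    (∀ x y t : ℝ, D3 1 0 0 f x y t
      = D3 0 1 0 g x y t - (g x y t * f x y t - f x y t * g x y t)) ∧
    (∀ x y t : ℝ, D3 0 1 0 f x y t
      = ((1:ℂ)/3) • (D3 0 0 1 g x y t - D3 3 0 0 g x y t)
        + (D3 1 0 0 g x y t * (f x y t + g x y t * g x y t)
            + (f x y t + g x y t * g x y t) * D3 1 0 0 g x y t)
        - (g x y t * s x y t - s x y t * g x y t)) := by
  have hq' : CD q := (cd_iff q).1 hq
  have hs' : CD s := (cd_iff s).1 hs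
  have cR : CD (fun x y t => Ring.inverse (q x y t)) := cd_inverse hq' hinv
  have hg : g = (fun x y t => Ring.inverse (q x y t)) * Pd (1,0,0) q := by
    funext x y t
    rw [hgdef x y t, D3_100 hq']
    rfl
  have hf : f = (fun x y t => Ring.inverse (q x y t)) * Pd (0,1,0) q := by
    funext x y t
    rw [hfdef x y t, D3_010 hq']
    rfl
  have cg : CD g := by rw [hg]; exact cd_mul cR (cd_Pd _ hq')
  have cf : CD f := by rw [hf]; exact cd_mul cR (cd_Pd _ hq')
  refine ⟨fun x y t => by rw [hfdef, hgdef], ?_, ?_⟩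
  · -- claim 2
    have big2 : Pd (1,0,0) f = Pd (0,1,0) g - (g * f - f * g) := by
      rw [hg, hf, Pd_mul cR (cd_Pd _ hq'), Pd_mul cR (cd_Pd _ hq'),
        Pd_inverse hq' hinv (1,0,0), Pd_inverse hq' hinv (0,1,0),
        Pd_comm (0,1,0) (1,0,0) hq']
      noncomm_ring
    intro x y t
    rw [D3_100 cf, D3_010 cg]
    exact congrFun (congrFun (congrFun big2 x) y) t
  · -- claim 3
    have hlp' : q * s = ((1:ℂ)/3) • (Pd (0,0,1) q - Pd (1,0,0) (Pd (1,0,0) (Pd (1,0,0) q)))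
        + Pd (1,0,0) q * (fun x y t => Ring.inverse (q x y t)) * Pd (1,0,0) (Pd (1,0,0) q)
        + Pd (1,0,0) q * (fun x y t => Ring.inverse (q x y t)) * Pd (0,1,0) q
        + Pd (0,1,0) q * (fun x y t => Ring.inverse (q x y t)) * Pd (1,0,0) q := by
      funext x y t
      have h := hlp x y t
      rw [D3_001 hq', D3_300 hq', D3_100 hq', D3_010 hq', D3_200 hq'] at h
      exact h
    have hsK : s = (fun x y t => Ring.inverse (q x y t)) *
        (((1:ℂ)/3) • (Pd (0,0,1) q - Pd (1,0,0) (Pd (1,0,0) (Pd (1,0,0) q)))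
          + Pd (1,0,0) q * (fun x y t => Ring.inverse (q x y t)) * Pd (1,0,0) (Pd (1,0,0) q)
          + Pd (1,0,0) q * (fun x y t => Ring.inverse (q x y t)) * Pd (0,1,0) q
          + Pd (0,1,0) q * (fun x y t => Ring.inverse (q x y t)) * Pd (1,0,0) q) := by
      calc s = 1 * s := (one_mul s).symm
        _ = ((fun x y t => Ring.inverse (q x y t)) * q) * s := by rw [inv_mul_q hinv]
        _ = (fun x y t => Ring.inverse (q x y t)) * (q * s) := by rw [mul_assoc]
        _ = _ := by rw [hlp']
    have cfgg : CD (f + g * g) := cd_add cf (cd_mul cg cg)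
    have hW : (fun x' y' t' =>
          Ring.inverse (q x' y' t') * D3 0 1 0 q x' y' t'
            + (Ring.inverse (q x' y' t') * D3 1 0 0 q x' y' t')
              * (Ring.inverse (q x' y' t') * D3 1 0 0 q x' y' t')) = f + g * g := by
      funext x y t
      rw [D3_100 hq', D3_010 hq', hf, hg]
      rfl
    have hsdef' : Pd (1,0,0) s = Pd (0,1,0) (f + g * g) := by
      rw [← D3_100 hs', ← D3_010 cfgg]
      funext x y t
      ext i j
      rw [show D3 0 1 0 (f + g * g) = D3 0 1 0 (fun x' y' t' =>
          Ring.inverse (q x' y' t') * D3 0 1 0 q x' y' t'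
            + (Ring.inverse (q x' y' t') * D3 1 0 0 q x' y' t')
              * (Ring.inverse (q x' y' t') * D3 1 0 0 q x' y' t')) from by rw [hW]]
      rw [hsdef x y t]
    have key : Pd (0,1,0) f = Pd (1,0,0) s - Pd (0,1,0) (g * g) := by
      rw [hsdef', Pd_add cf (cd_mul cg cg)]
      abel
    have big3 : Pd (0,1,0) f
        = ((1:ℂ)/3) • (Pd (0,0,1) g - Pd (1,0,0) (Pd (1,0,0) (Pd (1,0,0) g)))
          + (Pd (1,0,0) g * (f + g * g) + (f + g * g) * Pd (1,0,0) g)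
          - (g * s - s * g) := by
      rw [key, hsK, hg, hf]
      simp (disch := repeat first
            | assumption
            | apply cd_mul
            | apply cd_add
            | apply cd_sub
            | apply cd_neg
            | apply cd_smul
            | apply cd_Pd) only
        [Pd_mul, Pd_add, Pd_sub, Pd_smul, Pd_neg, Pd_inverse hq' hinv,
         Pd_comm (0,1,0) (1,0,0) hq', Pd_comm (0,0,1) (1,0,0) hq']
      simp only [mul_add, add_mul, mul_sub, sub_mul, mul_assoc, smul_mul_assoc,
        mul_smul_comm, smul_add, smul_sub, neg_mul, mul_neg, neg_neg, smul_neg, smul_smul]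
      match_scalars <;> ring
    intro x y t
    rw [D3_010 cf, D3_001 cg, D3_300 cg, D3_100 cg]
    exact congrFun (congrFun (congrFun big3 x) y) t

end NCKP
end

section
/- Commutative reduction of the lifted mKP equations. Let g, m : ℝ³ → ℝ be smooth functions of (x,y,t) (subscripts denote partial derivatives) satisfying m_x = g_y (so m plays the role of Dg with D = ∂_x^{-1}∂_y) and the commutative potential mKP equation m_y = (1/3)(g_t − g_{xxx}) + 2 g_x (m + g²). Then, with f := m, the third lifted mKP equation holds in its x-differentiated (local) form: ∂_y²(f + g²) = ∂_x[(1/3)(f_t − f_{xxx}) + 2 f_x (f + g²) + 2 g m_y]. Equivalently, in the commutative setting the triple (Dg, g, Dg), i.e. h = f = Dg, solves the commutative version of the lifted mKP equations. -/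
namespace NCKP

/-- `∂_x^c ∂_y^d ∂_t^e` of a real-valued function of `(x,y,t)`. -/
noncomputable def D3r (c d e : ℕ) (u : ℝ → ℝ → ℝ → ℝ) : ℝ → ℝ → ℝ → ℝ :=
  fun x y t =>
    iteratedDeriv c (fun x' =>
      iteratedDeriv d (fun y' =>
        iteratedDeriv e (fun t' => u x' y' t') t) y) x

/-- Smoothness of a real-valued function of `(x,y,t)`. -/
def Smooth3r (u : ℝ → ℝ → ℝ → ℝ) : Prop :=
  ContDiff ℝ (⊤ : ℕ∞) (fun v : ℝ × ℝ × ℝ => u v.1 v.2.1 v.2.2)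

end NCKP

namespace NCKP

abbrev E3 : Type := ℝ × ℝ × ℝ

def e1 : E3 := (1,0,0)
def e2 : E3 := (0,1,0)
def e3 : E3 := (0,0,1)

noncomputable def pd (v : E3) (U : E3 → ℝ) : E3 → ℝ := fun p => fderiv ℝ U p v

lemma pd_smooth {U : E3 → ℝ} (hU : ContDiff ℝ (⊤:ℕ∞) U) (v : E3) :
    ContDiff ℝ (⊤:ℕ∞) (pd v U) :=
  (hU.fderiv_right (by exact_mod_cast le_top)).clm_apply contDiff_const

lemma pd_comm {U : E3 → ℝ} (hU : ContDiff ℝ (⊤:ℕ∞) U) (v w : E3) :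
    pd v (pd w U) = pd w (pd v U) := by
  have hU1 : Differentiable ℝ U := hU.differentiable (by simp)
  have hfd : ContDiff ℝ (⊤:ℕ∞) (fderiv ℝ U) := hU.fderiv_right (by exact_mod_cast le_top)
  have hfd1 : Differentiable ℝ (fderiv ℝ U) := hfd.differentiable (by simp)
  have key : ∀ z : E3, ∀ a : E3, pd a (pd z U) = fun p =>
      (fderiv ℝ (fderiv ℝ U) p a) z := by
    intro z a
    funext p
    have hcomp : pd z U = fun q => (ContinuousLinearMap.apply ℝ ℝ z) (fderiv ℝ U q) := by
      funext q; simp [pd]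
    rw [hcomp]
    have h1 : HasFDerivAt (fun q => (ContinuousLinearMap.apply ℝ ℝ z) (fderiv ℝ U q))
        ((ContinuousLinearMap.apply ℝ ℝ z).comp (fderiv ℝ (fderiv ℝ U) p)) p :=
      (ContinuousLinearMap.apply ℝ ℝ z).hasFDerivAt.comp p (hfd1 p).hasFDerivAt
    simp only [pd]
    rw [h1.fderiv]
    simp
  rw [key w v, key v w]
  funext p
  exact second_derivative_symmetric (fun y => (hU1 y).hasFDerivAt)
    ((hfd1 p).hasFDerivAt) v w

/-- slices -/
lemma deriv_slice_x {U : E3 → ℝ} (hU : Differentiable ℝ U) (y t : ℝ) :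
    deriv (fun x' => U (x', y, t)) = fun x => pd e1 U (x, y, t) := by
  funext x
  have hL : HasDerivAt (fun x' : ℝ => ((x', y, t) : E3)) e1 x := by
    have := (hasDerivAt_id x).prodMk (hasDerivAt_const x ((y, t) : ℝ × ℝ))
    exact this
  exact ((hU (x, y, t)).hasFDerivAt.comp_hasDerivAt x hL).deriv

lemma deriv_slice_y {U : E3 → ℝ} (hU : Differentiable ℝ U) (x t : ℝ) :
    deriv (fun y' => U (x, y', t)) = fun y => pd e2 U (x, y, t) := by
  funext y
  have hL : HasDerivAt (fun y' : ℝ => ((x, y', t) : E3)) e2 y := by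
    have := (hasDerivAt_const y x).prodMk ((hasDerivAt_id y).prodMk (hasDerivAt_const y t))
    simpa [e1,e2,e3] using this
  exact ((hU (x, y, t)).hasFDerivAt.comp_hasDerivAt y hL).deriv

lemma deriv_slice_t {U : E3 → ℝ} (hU : Differentiable ℝ U) (x y : ℝ) :
    deriv (fun t' => U (x, y, t')) = fun t => pd e3 U (x, y, t) := by
  funext t
  have hL : HasDerivAt (fun t' : ℝ => ((x, y, t') : E3)) e3 t := by
    have := (hasDerivAt_const t x).prodMk ((hasDerivAt_const t y).prodMk (hasDerivAt_id t))
    simpa [e1,e2,e3] using this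
  exact ((hU (x, y, t)).hasFDerivAt.comp_hasDerivAt t hL).deriv

end NCKP

namespace NCKP

noncomputable def unc (u : ℝ → ℝ → ℝ → ℝ) : E3 → ℝ := fun p => u p.1 p.2.1 p.2.2

lemma smooth_unc {u : ℝ → ℝ → ℝ → ℝ} (hu : Smooth3r u) : ContDiff ℝ (⊤:ℕ∞) (unc u) := hu

lemma diff_of_smooth {U : E3 → ℝ} (hU : ContDiff ℝ (⊤:ℕ∞) U) : Differentiable ℝ U :=
  hU.differentiable (by simp)

lemma D3r_x1 {u : ℝ → ℝ → ℝ → ℝ} (hu : Smooth3r u) (x y t : ℝ) :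
    D3r 1 0 0 u x y t = pd e1 (unc u) (x, y, t) := by
  have hd : Differentiable ℝ (unc u) := diff_of_smooth (smooth_unc hu)
  simp only [D3r, iteratedDeriv_zero, iteratedDeriv_one]
  exact congrFun (deriv_slice_x hd y t) x

lemma D3r_y1 {u : ℝ → ℝ → ℝ → ℝ} (hu : Smooth3r u) (x y t : ℝ) :
    D3r 0 1 0 u x y t = pd e2 (unc u) (x, y, t) := by
  have hd : Differentiable ℝ (unc u) := diff_of_smooth (smooth_unc hu)
  simp only [D3r, iteratedDeriv_zero, iteratedDeriv_one]
  exact congrFun (deriv_slice_y hd x t) y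

lemma D3r_t1 {u : ℝ → ℝ → ℝ → ℝ} (hu : Smooth3r u) (x y t : ℝ) :
    D3r 0 0 1 u x y t = pd e3 (unc u) (x, y, t) := by
  have hd : Differentiable ℝ (unc u) := diff_of_smooth (smooth_unc hu)
  simp only [D3r, iteratedDeriv_zero, iteratedDeriv_one]
  exact congrFun (deriv_slice_t hd x y) t

lemma D3r_y2 {u : ℝ → ℝ → ℝ → ℝ} (hu : Smooth3r u) (x y t : ℝ) :
    D3r 0 2 0 u x y t = pd e2 (pd e2 (unc u)) (x, y, t) := by
  have hU : ContDiff ℝ (⊤:ℕ∞) (unc u) := smooth_unc hu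
  have hd : Differentiable ℝ (unc u) := diff_of_smooth hU
  have hd2 : Differentiable ℝ (pd e2 (unc u)) := diff_of_smooth (pd_smooth hU e2)
  simp only [D3r, iteratedDeriv_zero]
  show iteratedDeriv 2 (fun y' => unc u (x, y', t)) y = _
  rw [iteratedDeriv_succ, iteratedDeriv_one, deriv_slice_y hd x t]
  exact congrFun (deriv_slice_y hd2 x t) y

lemma D3r_x3 {u : ℝ → ℝ → ℝ → ℝ} (hu : Smooth3r u) (x y t : ℝ) :
    D3r 3 0 0 u x y t = pd e1 (pd e1 (pd e1 (unc u))) (x, y, t) := by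
  have hU : ContDiff ℝ (⊤:ℕ∞) (unc u) := smooth_unc hu
  have hd : Differentiable ℝ (unc u) := diff_of_smooth hU
  have hd2 : Differentiable ℝ (pd e1 (unc u)) := diff_of_smooth (pd_smooth hU e1)
  have hd3 : Differentiable ℝ (pd e1 (pd e1 (unc u))) := diff_of_smooth (pd_smooth (pd_smooth hU e1) e1)
  simp only [D3r, iteratedDeriv_zero]
  show iteratedDeriv 3 (fun x' => unc u (x', y, t)) x = _
  rw [iteratedDeriv_succ, iteratedDeriv_succ, iteratedDeriv_one,
    deriv_slice_x hd y t, deriv_slice_x hd2 y t]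
  exact congrFun (deriv_slice_x hd3 y t) x

lemma pd_add {U V : E3 → ℝ} (hU : Differentiable ℝ U) (hV : Differentiable ℝ V) (v : E3) :
    pd v (fun p => U p + V p) = fun p => pd v U p + pd v V p := by
  funext p
  simp only [pd]
  rw [fderiv_fun_add (hU p) (hV p)]
  simp

lemma pd_sub {U V : E3 → ℝ} (hU : Differentiable ℝ U) (hV : Differentiable ℝ V) (v : E3) :
    pd v (fun p => U p - V p) = fun p => pd v U p - pd v V p := by
  funext p
  simp only [pd]
  rw [fderiv_fun_sub (hU p) (hV p)]
  simp

lemma pd_const_mul {U : E3 → ℝ} (hU : Differentiable ℝ U) (c : ℝ) (v : E3) :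
    pd v (fun p => c * U p) = fun p => c * pd v U p := by
  funext p
  simp only [pd]
  rw [fderiv_const_mul (hU p) c]
  simp

lemma pd_mul {U V : E3 → ℝ} (hU : Differentiable ℝ U) (hV : Differentiable ℝ V) (v : E3) :
    pd v (fun p => U p * V p) = fun p => U p * pd v V p + V p * pd v U p := by
  funext p
  simp only [pd]
  rw [fderiv_fun_mul (hU p) (hV p)]
  simp

end NCKP

namespace NCKP

lemma pd_sq {U : E3 → ℝ} (hU : Differentiable ℝ U) (v : E3) :
    pd v (fun p => (U p)^2) = fun p => 2 * U p * pd v U p := by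
  have h : (fun p => (U p)^2) = fun p => U p * U p := by funext p; ring
  rw [h, pd_mul hU hU]
  funext p; ring

lemma pd_land (G M : E3 → ℝ) (hG : ContDiff ℝ (⊤:ℕ∞) G) (hM : ContDiff ℝ (⊤:ℕ∞) M)
    (H1 : pd e1 M = pd e2 G)
    (H2 : pd e2 M = fun p => (1/3) * (pd e3 G p - pd e1 (pd e1 (pd e1 G)) p)
        + 2 * pd e1 G p * (M p + (G p)^2)) :
    pd e2 (pd e2 (fun p => M p + (G p)^2))
      = pd e1 (fun q => (1/3) * (pd e3 M q - pd e1 (pd e1 (pd e1 M)) q)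
          + 2 * pd e1 M q * (M q + (G q)^2) + 2 * G q * pd e2 M q) := by
  have hG2 : ContDiff ℝ (⊤:ℕ∞) (fun p => (G p)^2) := hG.pow 2
  have hW : ContDiff ℝ (⊤:ℕ∞) (fun p => M p + (G p)^2) := hM.add hG2
  have dG := diff_of_smooth hG
  have dM := diff_of_smooth hM
  have dG2 := diff_of_smooth hG2
  have dW := diff_of_smooth hW
  have sBM := pd_smooth hM e2
  have dBM := diff_of_smooth sBM
  have sAG := pd_smooth hG e1
  have dAG := diff_of_smooth sAG
  have sBG := pd_smooth hG e2
  have dBG := diff_of_smooth sBG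
  have sCG := pd_smooth hG e3
  have dCG := diff_of_smooth sCG
  have sAM := pd_smooth hM e1
  have dAM := diff_of_smooth sAM
  have sCM := pd_smooth hM e3
  have dCM := diff_of_smooth sCM
  have sA2G := pd_smooth sAG e1
  have sA3G := pd_smooth sA2G e1
  have dA3G := diff_of_smooth sA3G
  have sA2M := pd_smooth sAM e1
  have sA3M := pd_smooth sA2M e1
  have dA3M := diff_of_smooth sA3M
  -- first-order expansions
  have eBW : pd e2 (fun p => M p + (G p)^2) = fun p => pd e2 M p + 2 * G p * pd e2 G p := by
    rw [pd_add dM dG2, pd_sq dG e2]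
  have eAW : pd e1 (fun p => M p + (G p)^2) = fun p => pd e2 G p + 2 * G p * pd e1 G p := by
    rw [pd_add dM dG2, pd_sq dG e1, H1]
  -- LHS outer expansion
  have d2GBG : Differentiable ℝ (fun p => 2 * (G p * pd e2 G p)) :=
    diff_of_smooth (contDiff_const.mul (hG.mul sBG))
  have assoc1 : (fun p => pd e2 M p + 2 * G p * pd e2 G p)
      = fun p => pd e2 M p + 2 * (G p * pd e2 G p) := by funext p; ring
  have eL : pd e2 (pd e2 (fun p => M p + (G p)^2))
      = fun p => pd e2 (pd e2 M) p + 2 * (G p * pd e2 (pd e2 G) p + pd e2 G p * pd e2 G p) := by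
    rw [eBW, assoc1, pd_add dBM d2GBG, pd_const_mul (dG.fun_mul dBG) 2, pd_mul dG dBG]
  -- commutations
  have c1 : pd e2 (pd e3 G) = pd e3 (pd e2 G) := pd_comm hG e2 e3
  have c2 : pd e2 (pd e1 (pd e1 (pd e1 G))) = pd e1 (pd e1 (pd e1 (pd e2 G))) := by
    rw [pd_comm sA2G e2 e1, pd_comm sAG e2 e1, pd_comm hG e2 e1]
  -- expansion of pd e2 (pd e2 M) via H2
  have dSubG : Differentiable ℝ (fun p => pd e3 G p - pd e1 (pd e1 (pd e1 G)) p) :=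
    diff_of_smooth (sCG.sub sA3G)
  have dfirst : Differentiable ℝ (fun p => (1/3) * (pd e3 G p - pd e1 (pd e1 (pd e1 G)) p)) :=
    diff_of_smooth (contDiff_const.mul (sCG.sub sA3G))
  have dsecond : Differentiable ℝ (fun p => 2 * (pd e1 G p * (M p + (G p)^2))) :=
    diff_of_smooth (contDiff_const.mul (sAG.mul hW))
  have assoc2 : (fun p => (1/3) * (pd e3 G p - pd e1 (pd e1 (pd e1 G)) p)
        + 2 * pd e1 G p * (M p + (G p)^2))
      = fun p => (1/3) * (pd e3 G p - pd e1 (pd e1 (pd e1 G)) p)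
        + 2 * (pd e1 G p * (M p + (G p)^2)) := by funext p; ring
  have eBBM : pd e2 (pd e2 M)
      = fun p => (1/3) * (pd e3 (pd e2 G) p - pd e2 (pd e1 (pd e1 (pd e1 G))) p)
        + 2 * (pd e1 G p * (pd e2 M p + 2 * G p * pd e2 G p)
          + (M p + (G p)^2) * pd e2 (pd e1 G) p) := by
    conv_lhs => rw [H2, assoc2, pd_add dfirst dsecond, pd_const_mul dSubG (1/3),
      pd_sub dCG dA3G, c1, pd_const_mul (dAG.fun_mul dW) 2, pd_mul dAG dW, eBW]
  -- RHS expansion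
  have assoc3 : (fun q => (1/3) * (pd e3 M q - pd e1 (pd e1 (pd e1 M)) q)
        + 2 * pd e1 M q * (M q + (G q)^2) + 2 * G q * pd e2 M q)
      = fun q => ((1/3) * (pd e3 M q - pd e1 (pd e1 (pd e1 M)) q)
        + 2 * (pd e1 M q * (M q + (G q)^2))) + 2 * (G q * pd e2 M q) := by
    funext q; ring
  have dSubM : Differentiable ℝ (fun q => pd e3 M q - pd e1 (pd e1 (pd e1 M)) q) :=
    diff_of_smooth (sCM.sub sA3M)
  have dfirstM : Differentiable ℝ (fun q => (1/3) * (pd e3 M q - pd e1 (pd e1 (pd e1 M)) q)) :=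
    diff_of_smooth (contDiff_const.mul (sCM.sub sA3M))
  have dsecondM : Differentiable ℝ (fun q => 2 * (pd e1 M q * (M q + (G q)^2))) :=
    diff_of_smooth (contDiff_const.mul (sAM.mul hW))
  have dA' : Differentiable ℝ (fun q => (1/3) * (pd e3 M q - pd e1 (pd e1 (pd e1 M)) q)
      + 2 * (pd e1 M q * (M q + (G q)^2))) :=
    diff_of_smooth ((contDiff_const.mul (sCM.sub sA3M)).add (contDiff_const.mul (sAM.mul hW)))
  have dC' : Differentiable ℝ (fun q => 2 * (G q * pd e2 M q)) :=
    diff_of_smooth (contDiff_const.mul (hG.mul sBM))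
  have r1 : pd e1 (pd e3 M) = pd e3 (pd e2 G) := by rw [pd_comm hM e1 e3, H1]
  have r5 : pd e1 (pd e2 M) = pd e2 (pd e2 G) := by rw [pd_comm hM e1 e2, H1]
  have eR : pd e1 (fun q => (1/3) * (pd e3 M q - pd e1 (pd e1 (pd e1 M)) q)
          + 2 * pd e1 M q * (M q + (G q)^2) + 2 * G q * pd e2 M q)
      = fun q => ((1/3) * (pd e3 (pd e2 G) q - pd e2 (pd e1 (pd e1 (pd e1 G))) q)
        + 2 * (pd e2 G q * (pd e2 G q + 2 * G q * pd e1 G q)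
          + (M q + (G q)^2) * pd e2 (pd e1 G) q)) + 2 * (G q * pd e2 (pd e2 G) q
          + pd e2 M q * pd e1 G q) := by
    rw [assoc3, pd_add dA' dC', pd_add dfirstM dsecondM, pd_const_mul dSubM (1/3),
      pd_sub dCM dA3M, pd_const_mul (dAM.fun_mul dW) 2, pd_mul dAM dW, eAW,
      pd_const_mul (dG.fun_mul dBM) 2, pd_mul dG dBM, r1, r5, H1, ← c2, pd_comm hG e1 e2]
  rw [eL, eBBM, eR]
  funext p
  ring

end NCKP

namespace NCKP

/-- **Commutative reduction of the lifted mKP equations.** If `g`, `m'` are smooth,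
`m'_x = g_y` (so `m'` plays the role of `Dg`), and the commutative potential mKP
equation `m'_y = (1/3)(g_t − g_xxx) + 2 g_x (m' + g²)` holds, then with `f := m'`
the third lifted mKP equation holds in its `x`-differentiated local form:
`∂_y²(f + g²) = ∂_x[(1/3)(f_t − f_xxx) + 2 f_x (f + g²) + 2 g m'_y]`;
i.e. the triple `(Dg, g, Dg)` solves the commutative lifted mKP equations. -/
theorem commutative_lifted_mKP_reduction (g m' : ℝ → ℝ → ℝ → ℝ)
    (hg : Smooth3r g) (hm : Smooth3r m')
    (hDg : ∀ x y t : ℝ, D3r 1 0 0 m' x y t = D3r 0 1 0 g x y t)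
    (hmKP : ∀ x y t : ℝ, D3r 0 1 0 m' x y t
      = (1/3) * (D3r 0 0 1 g x y t - D3r 3 0 0 g x y t)
        + 2 * D3r 1 0 0 g x y t * (m' x y t + (g x y t)^2)) :
    ∀ x y t : ℝ,
      D3r 0 2 0 (fun x' y' t' => m' x' y' t' + (g x' y' t')^2) x y t
      =
      D3r 1 0 0 (fun x' y' t' =>
        (1/3) * (D3r 0 0 1 m' x' y' t' - D3r 3 0 0 m' x' y' t')
        + 2 * D3r 1 0 0 m' x' y' t' * (m' x' y' t' + (g x' y' t')^2)
        + 2 * g x' y' t' * D3r 0 1 0 m' x' y' t') x y t := by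
  intro x y t
  have hG : ContDiff ℝ (⊤:ℕ∞) (unc g) := hg
  have hM : ContDiff ℝ (⊤:ℕ∞) (unc m') := hm
  have H1 : pd e1 (unc m') = pd e2 (unc g) := by
    funext p
    obtain ⟨a, b, c⟩ := p
    rw [← D3r_x1 hm a b c, ← D3r_y1 hg a b c]
    exact hDg a b c
  have H2 : pd e2 (unc m') = fun p =>
      (1/3) * (pd e3 (unc g) p - pd e1 (pd e1 (pd e1 (unc g))) p)
        + 2 * pd e1 (unc g) p * (unc m' p + (unc g p)^2) := by
    funext p
    obtain ⟨a, b, c⟩ := p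
    rw [← D3r_y1 hm a b c, ← D3r_t1 hg a b c, ← D3r_x3 hg a b c, ← D3r_x1 hg a b c]
    exact hmKP a b c
  have key := pd_land (unc g) (unc m') hG hM H1 H2
  have hWs : Smooth3r (fun x' y' t' => m' x' y' t' + (g x' y' t')^2) := hm.add (hg.pow 2)
  have hFΦ : unc (fun x' y' t' =>
        (1/3) * (D3r 0 0 1 m' x' y' t' - D3r 3 0 0 m' x' y' t')
        + 2 * D3r 1 0 0 m' x' y' t' * (m' x' y' t' + (g x' y' t')^2)
        + 2 * g x' y' t' * D3r 0 1 0 m' x' y' t')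
      = fun q => (1/3) * (pd e3 (unc m') q - pd e1 (pd e1 (pd e1 (unc m'))) q)
          + 2 * pd e1 (unc m') q * (unc m' q + (unc g q)^2)
          + 2 * unc g q * pd e2 (unc m') q := by
    funext p
    obtain ⟨a, b, c⟩ := p
    show (1/3) * (D3r 0 0 1 m' a b c - D3r 3 0 0 m' a b c)
        + 2 * D3r 1 0 0 m' a b c * (m' a b c + (g a b c)^2)
        + 2 * g a b c * D3r 0 1 0 m' a b c = _
    rw [D3r_t1 hm a b c, D3r_x3 hm a b c, D3r_x1 hm a b c, D3r_y1 hm a b c]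
    rfl
  have hΦs : ContDiff ℝ (⊤:ℕ∞) (fun q : E3 =>
      (1/3) * (pd e3 (unc m') q - pd e1 (pd e1 (pd e1 (unc m'))) q)
        + 2 * pd e1 (unc m') q * (unc m' q + (unc g q)^2)
        + 2 * unc g q * pd e2 (unc m') q) :=
    ((contDiff_const.mul ((pd_smooth hM e3).sub
        (pd_smooth (pd_smooth (pd_smooth hM e1) e1) e1))).add
      ((contDiff_const.mul (pd_smooth hM e1)).mul (hM.add (hG.pow 2)))).add
      ((contDiff_const.mul hG).mul (pd_smooth hM e2))
  have hFs : Smooth3r (fun x' y' t' =>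
        (1/3) * (D3r 0 0 1 m' x' y' t' - D3r 3 0 0 m' x' y' t')
        + 2 * D3r 1 0 0 m' x' y' t' * (m' x' y' t' + (g x' y' t')^2)
        + 2 * g x' y' t' * D3r 0 1 0 m' x' y' t') := by
    have h := hΦs
    rw [← hFΦ] at h
    exact h
  rw [D3r_y2 hWs x y t, D3r_x1 hFs x y t]
  have e' : pd e2 (pd e2 (unc (fun x' y' t' => m' x' y' t' + (g x' y' t')^2)))
      = pd e1 (unc (fun x' y' t' =>
        (1/3) * (D3r 0 0 1 m' x' y' t' - D3r 3 0 0 m' x' y' t')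
        + 2 * D3r 1 0 0 m' x' y' t' * (m' x' y' t' + (g x' y' t')^2)
        + 2 * g x' y' t' * D3r 0 1 0 m' x' y' t')) := by
    rw [hFΦ]
    rw [show unc (fun x' y' t' => m' x' y' t' + (g x' y' t')^2)
        = (fun p => unc m' p + (unc g p)^2) from rfl]
    exact key
  exact congrFun e' (x, y, t)

end NCKP
end
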